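/- arXiv:1512.00912 — 5 statements merged into one kernel-verified Lean document; each statement's English description precedes it below -/
import Mathlib

section
/- Let G be a σ-compact locally compact abelian group, χ a continuous character of G, and (A_n) a van Hove sequence in G. Then the averages (1/θ_G(A_n)) ∫_{A_n} χ(x) dθ_G(x) converge to 1 if χ is the trivial character, and to 0 otherwise. -/
open MeasureTheory Filter Classical
open scoped Pointwise ENNReal
open scoped Classical

/-- The (generalised) van Hove boundary `∂^U W`. -/
def vhBoundary {G : Type*} [AddGroup G] [TopologicalSpace G] (U W : Set G) : Set G :=
  ((U + closure W) ∩ closure Wᶜ) ∪ ((U + closure Wᶜ) ∩ closure W)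

/-- A van Hove sequence of compact sets of positive finite Haar measure. -/
def IsVanHove {G : Type*} [AddGroup G] [TopologicalSpace G] [MeasurableSpace G]
    (θ : Measure G) (A : ℕ → Set G) : Prop :=
  (∀ n, IsCompact (A n)) ∧ (∀ n, 0 < θ (A n)) ∧ (∀ n, θ (A n) < ⊤) ∧
    ∀ K : Set G, IsCompact K →
      Tendsto (fun n => θ (vhBoundary K (A n)) / θ (A n)) atTop (nhds 0)

/-- Restricting an s-finite Borel measure on an R₁ space to the closure of a compact set
is the same as restricting to the set itself. -/
lemma restrict_closure_of_isCompact {G : Type*} [TopologicalSpace G] [R1Space G]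
    [MeasurableSpace G] [BorelSpace G] (θ : Measure G) [SFinite θ] {K : Set G}
    (hK : IsCompact K) : θ.restrict (closure K) = θ.restrict K := by
  ext t ht
  rw [Measure.restrict_apply ht, Measure.restrict_apply ht]
  refine le_antisymm ?_ (measure_mono (Set.inter_subset_inter_right _ subset_closure))
  calc θ (t ∩ closure K)
      ≤ θ (t ∩ toMeasurable θ K) := measure_mono <| Set.inter_subset_inter_right _ <|
        hK.closure_subset_measurableSet (measurableSet_toMeasurable θ K) (subset_toMeasurable θ K)
    _ = θ (t ∩ K) := by
        rw [Set.inter_comm, Set.inter_comm t K, Measure.measure_toMeasurable_inter_of_sFinite ht _]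

/-- Averages of a continuous character over a van Hove sequence converge
to `1` for the trivial character and to `0` otherwise. -/
theorem character_average_vanHove
    {G : Type*} [AddCommGroup G] [TopologicalSpace G] [IsTopologicalAddGroup G]
    [LocallyCompactSpace G] [SigmaCompactSpace G] [MeasurableSpace G] [BorelSpace G]
    (θ : Measure G) [θ.IsAddHaarMeasure]
    (χ : G → ℂ) (hχc : Continuous χ) (hχm : ∀ x y, χ (x + y) = χ x * χ y)
    (hχu : ∀ x, ‖χ x‖ = 1)
    (A : ℕ → Set G) (hA : IsVanHove θ A) :
    Tendsto (fun n => ((θ (A n)).toReal)⁻¹ • ∫ x in A n, χ x ∂θ) atTop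
      (nhds (if ∀ x, χ x = 1 then 1 else 0)) := by
  obtain ⟨hAc, hApos, hAfin, hAvh⟩ := hA
  have hapos : ∀ n, (0:ℝ) < (θ (A n)).toReal := fun n =>
    ENNReal.toReal_pos (hApos n).ne' (hAfin n).ne
  by_cases htriv : ∀ x, χ x = 1
  · rw [if_pos htriv]
    have key : ∀ n, ((θ (A n)).toReal)⁻¹ • ∫ x in A n, χ x ∂θ = 1 := by
      intro n
      simp only [htriv]
      rw [setIntegral_const, smul_smul, measureReal_def, inv_mul_cancel₀ (hapos n).ne', one_smul]
    exact Tendsto.congr (fun n => (key n).symm) tendsto_const_nhds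
  · rw [if_neg htriv]
    push_neg at htriv
    obtain ⟨g, hg⟩ := htriv
    have hcpos : (0:ℝ) < ‖χ g - 1‖ := norm_pos_iff.2 (sub_ne_zero.2 hg)
    set c : ℝ := ‖χ g - 1‖
    set C : ℕ → Set G := fun n => closure (A n) with hCdef
    have hCc : ∀ n, IsCompact (C n) := fun n => (hAc n).closure
    have hCcl : ∀ n, IsClosed (C n) := fun n => isClosed_closure
    have hrestr : ∀ n, θ.restrict (C n) = θ.restrict (A n) := fun n =>
      restrict_closure_of_isCompact θ (hAc n)
    have hgCcl : ∀ n, IsClosed (g +ᵥ C n) := by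
      intro n
      rw [← Set.image_vadd]
      exact (Homeomorph.addLeft g).isClosedMap _ (hCcl n)
    have hgCc : ∀ n, IsCompact (g +ᵥ C n) := by
      intro n
      rw [← Set.image_vadd]
      exact (hCc n).image (continuous_add_left g)
    -- translation of the set integral
    have htrans : ∀ n, ∫ x in (g +ᵥ C n), χ x ∂θ = χ g * ∫ x in C n, χ x ∂θ := by
      intro n
      have hpre : (fun x => g + x) ⁻¹' (g +ᵥ C n) = C n := by
        ext x
        simp only [Set.mem_preimage, ← vadd_eq_add, Set.vadd_mem_vadd_set_iff]
      have hmap : θ.restrict (g +ᵥ C n)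
          = Measure.map (fun x => g + x) (θ.restrict (C n)) := by
        conv_lhs => rw [← measurePreserving_add_left θ g |>.map_eq]
        rw [Measure.restrict_map (measurable_const_add g) (hgCcl n).measurableSet, hpre]
      rw [show (∫ x in (g +ᵥ C n), χ x ∂θ) = ∫ x, χ x ∂(θ.restrict (g +ᵥ C n)) from rfl,
        hmap, integral_map (measurable_const_add g).aemeasurable hχc.aestronglyMeasurable]
      simp_rw [hχm g]
      exact integral_const_mul _ _
    -- integrability
    have hint : ∀ n, IntegrableOn χ (C n) θ := fun n =>
      Measure.integrableOn_of_bounded ((hCc n).measure_lt_top).ne hχc.aestronglyMeasurable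
        (Filter.Eventually.of_forall fun x => (hχu x).le)
    have hgint : ∀ n, IntegrableOn χ (g +ᵥ C n) θ := fun n =>
      Measure.integrableOn_of_bounded ((hgCc n).measure_lt_top).ne hχc.aestronglyMeasurable
        (Filter.Eventually.of_forall fun x => (hχu x).le)
    have hsing : ∀ s : Set G, {g} + s = g +ᵥ s := fun s => by
      ext x
      simp only [Set.singleton_add, Set.mem_image, Set.mem_vadd_set, vadd_eq_add]
    set B : ℕ → Set G := fun n => vhBoundary {g} (A n) with hBdef
    -- the two difference sets lie in the boundary
    have hD1 : ∀ n, (g +ᵥ C n) \ C n ⊆ B n := by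
      intro n x hx
      refine Or.inl ⟨?_, ?_⟩
      · rw [hsing]
        exact hx.1
      · exact subset_closure (fun hxA => hx.2 (subset_closure hxA))
    have hD2 : ∀ n, C n \ (g +ᵥ C n) ⊆ B n := by
      intro n x hx
      refine Or.inr ⟨?_, hx.1⟩
      have hnx : -g + x ∉ C n := by
        intro h
        exact hx.2 ⟨-g + x, h, add_neg_cancel_left g x⟩
      have : -g + x ∈ closure ((A n)ᶜ) := subset_closure (fun hxA => hnx (subset_closure hxA))
      exact ⟨g, rfl, -g + x, this, add_neg_cancel_left g x⟩
    have hBsub : ∀ n, B n ⊆ (g +ᵥ C n) ∪ C n := by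
      intro n x hx
      rcases hx with h | h
      · left; rw [← hsing]; exact h.1
      · right; exact h.2
    have hBfin : ∀ n, θ (B n) < ⊤ := fun n =>
      lt_of_le_of_lt (measure_mono (hBsub n))
        (lt_of_le_of_lt (measure_union_le _ _)
          (ENNReal.add_lt_top.2 ⟨(hgCc n).measure_lt_top, (hCc n).measure_lt_top⟩))
    -- the key norm estimate
    have hkey : ∀ n, c * ‖∫ x in A n, χ x ∂θ‖ ≤ 2 * (θ (B n)).toReal := by
      intro n
      have hIC : (∫ x in A n, χ x ∂θ) = ∫ x in C n, χ x ∂θ := by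
        show (∫ x, χ x ∂(θ.restrict (A n))) = ∫ x, χ x ∂(θ.restrict (C n))
        rw [hrestr n]
      have hsplit1 : (∫ x in (g +ᵥ C n), χ x ∂θ)
          = (∫ x in (g +ᵥ C n) ∩ C n, χ x ∂θ) + ∫ x in (g +ᵥ C n) \ C n, χ x ∂θ :=
        (integral_inter_add_diff (hCcl n).measurableSet (hgint n)).symm
      have hsplit2 : (∫ x in C n, χ x ∂θ)
          = (∫ x in C n ∩ (g +ᵥ C n), χ x ∂θ) + ∫ x in C n \ (g +ᵥ C n), χ x ∂θ :=
        (integral_inter_add_diff (hgCcl n).measurableSet (hint n)).symm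
      have hcomm : (∫ x in (g +ᵥ C n) ∩ C n, χ x ∂θ) = ∫ x in C n ∩ (g +ᵥ C n), χ x ∂θ := by
        rw [Set.inter_comm]
      have hdiff : (χ g - 1) * (∫ x in C n, χ x ∂θ)
          = (∫ x in (g +ᵥ C n) \ C n, χ x ∂θ) - ∫ x in C n \ (g +ᵥ C n), χ x ∂θ := by
        rw [sub_mul, one_mul, ← htrans n, hsplit1, hsplit2, hcomm]
        ring
      have hbound : ∀ (S : Set G), S ⊆ B n → MeasurableSet S →
          ‖∫ x in S, χ x ∂θ‖ ≤ (θ (B n)).toReal := by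
        intro S hS hSm
        calc ‖∫ x in S, χ x ∂θ‖ ≤ 1 * (θ S).toReal :=
              norm_setIntegral_le_of_norm_le_const
                (lt_of_le_of_lt (measure_mono hS) (hBfin n)) (fun x _ => (hχu x).le)
          _ ≤ (θ (B n)).toReal := by
              rw [one_mul]
              exact ENNReal.toReal_mono (hBfin n).ne (measure_mono hS)
      have hb1 := hbound _ (hD1 n) ((hgCcl n).measurableSet.diff (hCcl n).measurableSet)
      have hb2 := hbound _ (hD2 n) ((hCcl n).measurableSet.diff (hgCcl n).measurableSet)
      calc c * ‖∫ x in A n, χ x ∂θ‖ = ‖(χ g - 1) * ∫ x in C n, χ x ∂θ‖ := by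
            rw [norm_mul, hIC]
        _ = ‖(∫ x in (g +ᵥ C n) \ C n, χ x ∂θ) - ∫ x in C n \ (g +ᵥ C n), χ x ∂θ‖ := by
            rw [hdiff]
        _ ≤ ‖∫ x in (g +ᵥ C n) \ C n, χ x ∂θ‖ + ‖∫ x in C n \ (g +ᵥ C n), χ x ∂θ‖ :=
            norm_sub_le _ _
        _ ≤ 2 * (θ (B n)).toReal := by linarith
    -- finish by squeezing
    have hmajor : ∀ n, ‖((θ (A n)).toReal)⁻¹ • ∫ x in A n, χ x ∂θ‖
        ≤ (2 / c) * (θ (B n) / θ (A n)).toReal := by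
      intro n
      rw [norm_smul, Real.norm_eq_abs, abs_of_nonneg (inv_nonneg.2 (hapos n).le),
        ENNReal.toReal_div]
      have hIle : ‖∫ x in A n, χ x ∂θ‖ ≤ 2 * (θ (B n)).toReal / c := by
        rw [le_div_iff₀ hcpos]
        linarith [hkey n]
      calc ((θ (A n)).toReal)⁻¹ * ‖∫ x in A n, χ x ∂θ‖
          ≤ ((θ (A n)).toReal)⁻¹ * (2 * (θ (B n)).toReal / c) :=
            mul_le_mul_of_nonneg_left hIle (inv_nonneg.2 (hapos n).le)
        _ = (2 / c) * ((θ (B n)).toReal / (θ (A n)).toReal) := by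
            field_simp
    have htend : Tendsto (fun n => (2 / c) * (θ (B n) / θ (A n)).toReal) atTop (nhds 0) := by
      have h0 := hAvh {g} isCompact_singleton
      have h1 : Tendsto (fun n => (θ (B n) / θ (A n)).toReal) atTop (nhds 0) := by
        exact (ENNReal.tendsto_toReal (by simp : (0:ℝ≥0∞) ≠ ⊤)).comp h0
      have := h1.const_mul (2 / c)
      simpa using this
    rw [tendsto_zero_iff_norm_tendsto_zero]
    exact squeeze_zero (fun n => norm_nonneg _) hmajor htend
end

section
/- Let G be a σ-compact locally compact abelian group, χ a nontrivial character, y ∈ G with χ(y) ≠ 1, and (A_n) a van Hove sequence. Then |∫_{(−y)+A_n} χ dθ_G − ∫_{A_n} χ dθ_G| ≤ θ_G(∂^{{−y}} A_n), and consequently |1 − χ(y)| · |(1/θ_G(A_n)) ∫_{A_n} χ dθ_G| → 0 as n → ∞. -/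
open MeasureTheory Filter
open scoped Pointwise ENNReal

/-- For a nontrivial character `χ` with `χ y ≠ 1` and a van Hove
sequence `(A n)`, the integral of `χ` over `(-y) + A n` differs from that over `A n`
by at most `θ (∂^{{-y}} A n)`, and consequently the normalised character averages,
multiplied by `|1 - χ y|`, tend to `0`. -/
theorem character_average_estimate_vanHove
    {G : Type*} [AddCommGroup G] [TopologicalSpace G] [IsTopologicalAddGroup G]
    [LocallyCompactSpace G] [SigmaCompactSpace G] [MeasurableSpace G] [BorelSpace G]
    (θ : Measure G) [θ.IsAddHaarMeasure]
    (χ : G → ℂ) (hχc : Continuous χ) (hχm : ∀ x y, χ (x + y) = χ x * χ y)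
    (hχu : ∀ x, ‖χ x‖ = 1)
    (y : G) (hy : χ y ≠ 1)
    (A : ℕ → Set G) (hA : IsVanHove θ A) :
    (∀ n, ‖(∫ x in (-y) +ᵥ A n, χ x ∂θ) - ∫ x in A n, χ x ∂θ‖ ≤
        (θ (vhBoundary {-y} (A n))).toReal) ∧
      Tendsto
        (fun n => ‖1 - χ y‖ * ‖((θ (A n)).toReal)⁻¹ • ∫ x in A n, χ x ∂θ‖) atTop
        (nhds 0) := by
  obtain ⟨hAc, hApos, hAfin, hAvh⟩ := hA
  -- basic facts about the character
  have hχ0 : χ 0 = 1 := by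
    have h0 : χ 0 ≠ 0 := by
      intro h; have := hχu 0; rw [h] at this; simp at this
    have h := hχm 0 0
    rw [add_zero] at h
    exact (mul_left_cancel₀ h0 (by rw [mul_one, ← h])).symm
  have hχny : χ (-y) * χ y = 1 := by rw [← hχm, neg_add_cancel, hχ0]
  have hnorm : ‖χ (-y) - 1‖ = ‖1 - χ y‖ := by
    have : χ (-y) - 1 = χ (-y) * (1 - χ y) := by rw [mul_sub, mul_one, hχny]
    rw [this, norm_mul, hχu, one_mul]
  -- restricting to a compact set is the same as restricting to its closure
  have hrs : ∀ s : Set G, IsCompact s → θ.restrict s = θ.restrict (closure s) := by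
    intro s hs
    ext t ht
    rw [Measure.restrict_apply ht, Measure.restrict_apply ht]
    refine le_antisymm
      (measure_mono (Set.inter_subset_inter_right _ subset_closure)).ge ?_
    calc θ (t ∩ closure s)
        ≤ θ (t ∩ toMeasurable θ s) := measure_mono (Set.inter_subset_inter_right _
          (hs.closure_subset_measurableSet (measurableSet_toMeasurable θ s)
            (subset_toMeasurable θ s)))
      _ = θ (toMeasurable θ s ∩ t) := by rw [Set.inter_comm]
      _ = θ (s ∩ t) := Measure.measure_toMeasurable_inter ht hs.measure_lt_top.ne
      _ = θ (t ∩ s) := by rw [Set.inter_comm]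
  -- boundary facts
  have hBd : ∀ n, vhBoundary {-y} (A n) =
      (((-y) +ᵥ closure (A n)) ∩ closure (A n)ᶜ) ∪
        (((-y) +ᵥ closure (A n)ᶜ) ∩ closure (A n)) := by
    intro n
    have h1 : ({-y} : Set G) + closure (A n) = (-y) +ᵥ closure (A n) := by
      rw [Set.singleton_add, ← Set.image_vadd]; rfl
    have h2 : ({-y} : Set G) + closure (A n)ᶜ = (-y) +ᵥ closure (A n)ᶜ := by
      rw [Set.singleton_add, ← Set.image_vadd]; rfl
    rw [vhBoundary, h1, h2]
  have hvaddc : ∀ s : Set G, IsCompact s → IsCompact ((-y) +ᵥ s) := by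
    intro s hs
    rw [← Set.image_vadd]
    exact hs.image (continuous_const_vadd _)
  have hBc : ∀ n, IsCompact (vhBoundary {-y} (A n)) := by
    intro n
    rw [hBd n]
    refine IsCompact.union ?_ ?_
    · exact ((hvaddc _ (hAc n).closure).of_isClosed_subset
        ((isClosed_closure.vadd _).inter isClosed_closure) Set.inter_subset_left)
    · exact ((hAc n).closure.of_isClosed_subset
        ((isClosed_closure.vadd _).inter isClosed_closure) Set.inter_subset_right)
  have hBfin : ∀ n, θ (vhBoundary {-y} (A n)) ≠ ⊤ := fun n => (hBc n).measure_lt_top.ne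
  -- Part 1
  have part1 : ∀ n, ‖(∫ x in (-y) +ᵥ A n, χ x ∂θ) - ∫ x in A n, χ x ∂θ‖ ≤
      (θ (vhBoundary {-y} (A n))).toReal := by
    intro n
    set S : Set G := (-y) +ᵥ closure (A n) with hSdef
    set T : Set G := closure (A n) with hTdef
    have hSA : θ.restrict ((-y) +ᵥ A n) = θ.restrict S := by
      rw [hrs _ (hvaddc _ (hAc n)), closure_vadd]
    have hTA : θ.restrict (A n) = θ.restrict T := hrs _ (hAc n)
    have hSc : IsCompact S := hvaddc _ (hAc n).closure
    have hTc : IsCompact T := (hAc n).closure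
    have hScl : IsClosed S := isClosed_closure.vadd _
    have hTcl : IsClosed T := isClosed_closure
    have hSm : MeasurableSet S := hScl.measurableSet
    have hTm : MeasurableSet T := hTcl.measurableSet
    have hIS : IntegrableOn χ S θ := hχc.continuousOn.integrableOn_compact' hSc hSm
    have hIT : IntegrableOn χ T θ := hχc.continuousOn.integrableOn_compact' hTc hTm
    -- split the integrals
    have hsplitS : ∫ x in S, χ x ∂θ = (∫ x in S \ T, χ x ∂θ) + ∫ x in S ∩ T, χ x ∂θ := by
      rw [← setIntegral_union Set.disjoint_sdiff_inter (hSm.inter hTm)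
          (hIS.mono_set Set.diff_subset) (hIS.mono_set Set.inter_subset_left),
        Set.diff_union_inter]
    have hsplitT : ∫ x in T, χ x ∂θ = (∫ x in T \ S, χ x ∂θ) + ∫ x in S ∩ T, χ x ∂θ := by
      rw [Set.inter_comm]
      rw [← setIntegral_union Set.disjoint_sdiff_inter (hTm.inter hSm)
          (hIT.mono_set Set.diff_subset) (hIT.mono_set Set.inter_subset_left),
        Set.diff_union_inter]
    have hdiff : (∫ x in S, χ x ∂θ) - ∫ x in T, χ x ∂θ =
        (∫ x in S \ T, χ x ∂θ) - ∫ x in T \ S, χ x ∂θ := by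
      rw [hsplitS, hsplitT]; ring
    -- inclusions into the boundary
    have hsub1 : S \ T ⊆ ((-y) +ᵥ closure (A n)) ∩ closure (A n)ᶜ := by
      rintro x ⟨hxS, hxT⟩
      exact ⟨hxS, subset_closure (fun h => hxT (subset_closure h))⟩
    have hsub2 : T \ S ⊆ ((-y) +ᵥ closure (A n)ᶜ) ∩ closure (A n) := by
      rintro x ⟨hxT, hxS⟩
      refine ⟨?_, hxT⟩
      rw [Set.mem_vadd_set_iff_neg_vadd_mem] at hxS ⊢
      exact subset_closure (fun h => hxS (subset_closure h))
    have hsub : (S \ T) ∪ (T \ S) ⊆ vhBoundary {-y} (A n) := by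
      rw [hBd n]
      exact Set.union_subset_union hsub1 hsub2
    -- measure bounds
    have hmeas : θ (S \ T) + θ (T \ S) ≤ θ (vhBoundary {-y} (A n)) := by
      rw [← measure_union disjoint_sdiff_sdiff (hTm.diff hSm)]
      exact measure_mono hsub
    have hfin1 : θ (S \ T) ≠ ⊤ := (lt_of_le_of_lt (measure_mono Set.diff_subset)
      hSc.measure_lt_top).ne
    have hfin2 : θ (T \ S) ≠ ⊤ := (lt_of_le_of_lt (measure_mono Set.diff_subset)
      hTc.measure_lt_top).ne
    have hrw1 : (∫ x in (-y) +ᵥ A n, χ x ∂θ) = ∫ x in S, χ x ∂θ := by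
      unfold S; rw [← hSA]
    have hrw2 : (∫ x in A n, χ x ∂θ) = ∫ x in T, χ x ∂θ := by
      unfold T; rw [← hTA]
    rw [hrw1, hrw2]
    calc ‖(∫ x in S, χ x ∂θ) - ∫ x in T, χ x ∂θ‖
        = ‖(∫ x in S \ T, χ x ∂θ) - ∫ x in T \ S, χ x ∂θ‖ := by rw [hdiff]
      _ ≤ ‖∫ x in S \ T, χ x ∂θ‖ + ‖∫ x in T \ S, χ x ∂θ‖ := norm_sub_le _ _
      _ ≤ 1 * (θ (S \ T)).toReal + 1 * (θ (T \ S)).toReal := by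
          gcongr
          · exact norm_setIntegral_le_of_norm_le_const hfin1.lt_top
              (fun x _ => (hχu x).le)
          · exact norm_setIntegral_le_of_norm_le_const hfin2.lt_top
              (fun x _ => (hχu x).le)
      _ = (θ (S \ T) + θ (T \ S)).toReal := by
          rw [one_mul, one_mul, ENNReal.toReal_add hfin1 hfin2]
      _ ≤ (θ (vhBoundary {-y} (A n))).toReal :=
          ENNReal.toReal_mono (hBfin n) hmeas
  refine ⟨part1, ?_⟩
  -- Part 2: translation identity
  have htrans : ∀ n, ∫ x in (-y) +ᵥ A n, χ x ∂θ = χ (-y) * ∫ x in A n, χ x ∂θ := by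
    intro n
    have h1 : (-y : G) +ᵥ A n = (fun x => -y + x) '' A n := by
      rw [← Set.image_vadd]; rfl
    rw [h1, (measurePreserving_add_left θ (-y)).setIntegral_image_emb
      (MeasurableEquiv.addLeft (-y : G)).measurableEmbedding]
    simp_rw [hχm (-y)]
    exact integral_const_mul _ _
  have key : ∀ n, ‖1 - χ y‖ * ‖∫ x in A n, χ x ∂θ‖ ≤ (θ (vhBoundary {-y} (A n))).toReal := by
    intro n
    have h := part1 n
    rw [htrans n, ← sub_one_mul, norm_mul, hnorm] at h
    exact h
  -- squeeze
  have hub : ∀ n, ‖1 - χ y‖ * ‖((θ (A n)).toReal)⁻¹ • ∫ x in A n, χ x ∂θ‖ ≤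
      (θ (vhBoundary {-y} (A n)) / θ (A n)).toReal := by
    intro n
    have hApos' : 0 < (θ (A n)).toReal := ENNReal.toReal_pos (hApos n).ne' (hAfin n).ne
    rw [norm_smul, Real.norm_eq_abs, abs_of_nonneg (inv_nonneg.2 hApos'.le),
      ENNReal.toReal_div, div_eq_inv_mul]
    calc ‖1 - χ y‖ * (((θ (A n)).toReal)⁻¹ * ‖∫ x in A n, χ x ∂θ‖)
        = ((θ (A n)).toReal)⁻¹ * (‖1 - χ y‖ * ‖∫ x in A n, χ x ∂θ‖) := by ring
      _ ≤ ((θ (A n)).toReal)⁻¹ * (θ (vhBoundary {-y} (A n))).toReal := by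
          gcongr
          exact key n
  have hto : Tendsto (fun n => (θ (vhBoundary {-y} (A n)) / θ (A n)).toReal) atTop (nhds 0) := by
    have h := (ENNReal.tendsto_toReal (by simp : (0 : ℝ≥0∞) ≠ ⊤)).comp
      (hAvh {-y} isCompact_singleton)
    rw [ENNReal.toReal_zero] at h
    exact h
  exact squeeze_zero (fun n => by positivity) hub hto
end

section
/- Let G, H be locally compact abelian groups, ℒ a lattice in G×H with dense projection π^H(ℒ) in H, and let W ⊆ H have non-empty interior. Then the model set ⋀(W) = π^G(ℒ ∩ (G×W)) is relatively dense in G, i.e., there exists a compact K ⊆ G with ⋀(W) + K = G. -/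
open scoped Pointwise

/-- If the lattice `L ⊆ G × H` projects densely to `H` and the window
`W ⊆ H` has non-empty interior, then the model set `⋀(W) = π^G(L ∩ (G × W))` is
relatively dense in `G`: there is a compact `K` with `⋀(W) + K = G`. -/
theorem modelSet_relativelyDense
    {G H : Type*}
    [AddCommGroup G] [TopologicalSpace G] [IsTopologicalAddGroup G] [LocallyCompactSpace G]
    [AddCommGroup H] [TopologicalSpace H] [IsTopologicalAddGroup H] [LocallyCompactSpace H]
    (L : AddSubgroup (G × H)) [DiscreteTopology L] [CompactSpace ((G × H) ⧸ L)]
    (hdense : Dense (Prod.snd '' (L : Set (G × H))))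
    (W : Set H) (hW : (interior W).Nonempty) :
    ∃ K : Set G, IsCompact K ∧ {g : G | ∃ y ∈ W, (g, y) ∈ L} + K = Set.univ := by
  obtain ⟨w₀, hw₀⟩ := hW
  -- symmetric open neighborhood U₀ of 0 with w₀ ± U₀ ⊆ interior W
  set U₀ : Set H := {u | w₀ + u ∈ interior W ∧ w₀ - u ∈ interior W} with hU₀def
  have hU₀open : IsOpen U₀ := by
    have h1 : IsOpen ((fun u : H => w₀ + u) ⁻¹' interior W) :=
      isOpen_interior.preimage (by continuity)
    have h2 : IsOpen ((fun u : H => w₀ - u) ⁻¹' interior W) :=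
      isOpen_interior.preimage (by continuity)
    exact h1.inter h2
  have h0U₀ : (0 : H) ∈ U₀ := by
    constructor <;> simpa using hw₀
  -- compact neighborhood of 0 in G
  obtain ⟨Kc, hKc_comp, hKc_nhds⟩ := exists_compact_mem_nhds (0 : G)
  set V : Set G := interior Kc with hVdef
  have hVopen : IsOpen V := isOpen_interior
  have h0V : (0 : G) ∈ V := mem_interior_iff_mem_nhds.2 hKc_nhds
  -- open sets in the quotient
  set q : G × H → (G × H) ⧸ L := QuotientAddGroup.mk with hqdef
  set O : G → Set ((G × H) ⧸ L) :=
    fun g => q '' ((fun p : G × H => ((g, w₀) + p)) '' (V ×ˢ U₀)) with hOdef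
  have hOopen : ∀ g, IsOpen (O g) := by
    intro g
    have hq : IsOpenMap q := QuotientAddGroup.isOpenMap_coe
    have himg : IsOpen ((fun p : G × H => ((g, w₀) + p)) '' (V ×ˢ U₀)) := by
      have : ((fun p : G × H => ((g, w₀) + p)) '' (V ×ˢ U₀))
          = (Homeomorph.addLeft ((g, w₀) : G × H)) '' (V ×ˢ U₀) := rfl
      rw [this, Homeomorph.isOpen_image]
      exact hVopen.prod hU₀open
    exact hq _ himg
  -- the O g cover the quotient
  have hcover : ∀ p : (G × H) ⧸ L, p ∈ ⋃ g : G, O g := by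
    intro p
    obtain ⟨⟨x, h⟩, rfl⟩ := QuotientAddGroup.mk_surjective p
    -- find a lattice point whose H-coordinate is close to h - w₀
    have hopen : IsOpen {y : H | h - w₀ - y ∈ U₀} :=
      hU₀open.preimage (by continuity)
    have hne : {y : H | h - w₀ - y ∈ U₀}.Nonempty :=
      ⟨h - w₀, by simpa using h0U₀⟩
    obtain ⟨y, hy, hyU⟩ := hdense.exists_mem_open hopen hne
    obtain ⟨ℓ, hℓL, hℓ2⟩ := hy
    refine Set.mem_iUnion.2 ⟨x - ℓ.1, ⟨(x, h) - ℓ, ⟨(0, h - ℓ.2 - w₀), ⟨h0V, ?_⟩, ?_⟩, ?_⟩⟩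
    · simpa [hℓ2, sub_sub, add_comm w₀ y] using hyU
    · simp [Prod.ext_iff]
    · show q ((x, h) - ℓ) = q (x, h)
      rw [hqdef]
      rw [QuotientAddGroup.eq]
      simpa using hℓL
  obtain ⟨t, ht⟩ := isCompact_univ.elim_finite_subcover O hOopen
    (fun p _ => hcover p)
  refine ⟨⋃ g ∈ t, (fun x => g + x) '' Kc, ?_, ?_⟩
  · exact t.finite_toSet.isCompact_biUnion
      (fun g _ => hKc_comp.image (continuous_add_left g))
  · apply Set.eq_univ_of_forall
    intro x
    have := ht (Set.mem_univ (q (x, w₀ + w₀)))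
    obtain ⟨g, hgt, a, b, ⟨hv, hu⟩, ha⟩ := by
      simpa [O, Set.mem_iUnion] using this
    have hL : ((x - a, w₀ + w₀ - b) : G × H) ∈ L := by
      have h3 := (QuotientAddGroup.eq (s := L)).1 ha
      have h4 : (-(a, b) + (x, w₀ + w₀) : G × H) = (x - a, w₀ + w₀ - b) := by
        simp [Prod.ext_iff]; constructor <;> abel
      rwa [h4] at h3
    have hW2 : w₀ + w₀ - b ∈ W := by
      have h5 : w₀ - (-w₀ + b) = w₀ + w₀ - b := by abel
      exact interior_subset (h5 ▸ hu.2)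
    refine Set.mem_add.2 ⟨x - a, ⟨w₀ + w₀ - b, hW2, hL⟩, g + (-g + a), ?_, by abel⟩
    exact Set.mem_biUnion hgt ⟨-g + a, interior_subset hv, rfl⟩
end

section
/- Let (G,H,ℒ) be a cut-and-project scheme with G σ-compact satisfying the density formula, and let h : H → ℂ be Riemann integrable. Then ω_h has the unique autocorrelation γ = dens(ℒ) · ω_{h*h̃}, i.e., for every van Hove sequence (A_n), the measures (1/θ_G(A_n)) (ω_h|_{A_n}) * (ω_h|_{A_n})~ converge vaguely to dens(ℒ) · ∑_{(z,z')∈ℒ} (h*h̃)(z') δ_z. -/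
open MeasureTheory Filter
open scoped ENNReal Pointwise

/-- A real function is Riemann integrable (w.r.t. the Haar measure `θ`) if it can be
squeezed between continuous compactly supported functions of arbitrarily close
integrals. -/
def RiemannIntegrableR {H : Type*} [TopologicalSpace H] [MeasurableSpace H]
    (θ : Measure H) (u : H → ℝ) : Prop :=
  ∀ ε > (0 : ℝ), ∃ g₁ g₂ : H → ℝ,
    Continuous g₁ ∧ Continuous g₂ ∧ HasCompactSupport g₁ ∧ HasCompactSupport g₂ ∧
      (∀ y, g₁ y ≤ u y ∧ u y ≤ g₂ y) ∧ ∫ y, (g₂ y - g₁ y) ∂θ ≤ ε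

/-- A complex function is Riemann integrable if its real and imaginary parts are. -/
def RiemannIntegrable {H : Type*} [TopologicalSpace H] [MeasurableSpace H]
    (θ : Measure H) (h : H → ℂ) : Prop :=
  RiemannIntegrableR θ (fun y => (h y).re) ∧ RiemannIntegrableR θ (fun y => (h y).im)

section AuxRI

variable {H : Type*} [TopologicalSpace H] [MeasurableSpace H] [OpensMeasurableSpace H]
  {θ : Measure H} [IsFiniteMeasureOnCompacts θ]

private lemma hcs_of_support_subset {g g' : H → ℝ} (hg : HasCompactSupport g)
    (hsub : Function.support g' ⊆ Function.support g) : HasCompactSupport g' :=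
  hg.of_isClosed_subset isClosed_closure (closure_mono hsub)

private lemma RiemannIntegrableR.bound {u : H → ℝ} (hu : RiemannIntegrableR θ u) :
    ∃ (K : Set H) (M : ℝ), IsCompact K ∧ 0 ≤ M ∧ (∀ y, y ∉ K → u y = 0) ∧ ∀ y, |u y| ≤ M := by
  obtain ⟨g₁, g₂, hc₁, hc₂, hs₁, hs₂, hsq, -⟩ := hu 1 one_pos
  obtain ⟨C₁, hC₁⟩ := hs₁.exists_bound_of_continuous hc₁
  obtain ⟨C₂, hC₂⟩ := hs₂.exists_bound_of_continuous hc₂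
  refine ⟨tsupport g₁ ∪ tsupport g₂, |C₁| + |C₂|,
    hs₁.union hs₂, by positivity, fun y hy => ?_, fun y => ?_⟩
  · have h1 : g₁ y = 0 := image_eq_zero_of_notMem_tsupport (fun m => hy (Or.inl m))
    have h2 : g₂ y = 0 := image_eq_zero_of_notMem_tsupport (fun m => hy (Or.inr m))
    have := hsq y
    linarith [this.1, this.2]
  · have h1 : -C₁ ≤ g₁ y := neg_le_of_abs_le (by simpa [Real.norm_eq_abs] using hC₁ y)
    have h2 : g₂ y ≤ C₂ := le_of_abs_le (by simpa [Real.norm_eq_abs] using hC₂ y)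
    have := hsq y
    refine abs_le.2 ⟨?_, ?_⟩
    · have h3 : -C₁ ≤ u y := h1.trans this.1
      have h4 : C₁ ≤ |C₁| + |C₂| := by
        have := le_abs_self C₁; have := abs_nonneg C₂; linarith
      linarith
    · have h4 : C₂ ≤ |C₁| + |C₂| := by
        have := le_abs_self C₂; have := abs_nonneg C₁; linarith
      linarith [this.2, h2]

private lemma cts_int {g : H → ℝ} (hc : Continuous g) (hs : HasCompactSupport g) :
    Integrable g θ := hc.integrable_of_hasCompactSupport hs

private lemma RiemannIntegrableR.neg {u : H → ℝ} (hu : RiemannIntegrableR θ u) :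
    RiemannIntegrableR θ (fun y => -u y) := by
  intro ε hε
  obtain ⟨g₁, g₂, hc₁, hc₂, hs₁, hs₂, hsq, hi⟩ := hu ε hε
  have hns : ∀ {g : H → ℝ}, HasCompactSupport g → HasCompactSupport (fun y => -g y) :=
    fun {g} hg => hcs_of_support_subset hg (fun y hy => by
      simp only [Function.mem_support, ne_eq, neg_eq_zero] at hy ⊢; exact hy)
  refine ⟨fun y => -g₂ y, fun y => -g₁ y, hc₂.neg, hc₁.neg, hns hs₂, hns hs₁,
    fun y => ⟨neg_le_neg (hsq y).2, neg_le_neg (hsq y).1⟩, ?_⟩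
  have : (fun y => -g₁ y - -g₂ y) = fun y => g₂ y - g₁ y := by funext y; ring
  rw [this]; exact hi

private lemma RiemannIntegrableR.add {u v : H → ℝ} (hu : RiemannIntegrableR θ u)
    (hv : RiemannIntegrableR θ v) : RiemannIntegrableR θ (fun y => u y + v y) := by
  intro ε hε
  obtain ⟨g₁, g₂, hc₁, hc₂, hs₁, hs₂, hsq, hi⟩ := hu (ε/2) (by linarith)
  obtain ⟨k₁, k₂, hd₁, hd₂, ht₁, ht₂, hsq', hi'⟩ := hv (ε/2) (by linarith)
  refine ⟨fun y => g₁ y + k₁ y, fun y => g₂ y + k₂ y, hc₁.add hd₁, hc₂.add hd₂,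
    hs₁.add ht₁, hs₂.add ht₂,
    fun y => ⟨add_le_add (hsq y).1 (hsq' y).1, add_le_add (hsq y).2 (hsq' y).2⟩, ?_⟩
  have heq : (fun y => (g₂ y + k₂ y) - (g₁ y + k₁ y))
      = fun y => (g₂ y - g₁ y) + (k₂ y - k₁ y) := by funext y; ring
  have ia : Integrable (fun y => g₂ y - g₁ y) θ := (cts_int hc₂ hs₂).sub (cts_int hc₁ hs₁)
  have ib : Integrable (fun y => k₂ y - k₁ y) θ := (cts_int hd₂ ht₂).sub (cts_int hd₁ ht₁)
  rw [heq, integral_add ia ib]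
  linarith

private lemma RiemannIntegrableR.posPart {u : H → ℝ} (hu : RiemannIntegrableR θ u) :
    RiemannIntegrableR θ (fun y => max (u y) 0) := by
  intro ε hε
  obtain ⟨g₁, g₂, hc₁, hc₂, hs₁, hs₂, hsq, hi⟩ := hu ε hε
  refine ⟨fun y => max (g₁ y) 0, fun y => max (g₂ y) 0, hc₁.max continuous_const,
    hc₂.max continuous_const,
    hcs_of_support_subset hs₁ (fun y hy => by
      simp only [Function.mem_support] at hy ⊢; intro h0; simp [h0] at hy),
    hcs_of_support_subset hs₂ (fun y hy => by
      simp only [Function.mem_support] at hy ⊢; intro h0; simp [h0] at hy),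
    fun y => ⟨max_le_max (hsq y).1 le_rfl, max_le_max (hsq y).2 le_rfl⟩, ?_⟩
  have key : ∀ y, max (g₂ y) 0 - max (g₁ y) 0 ≤ g₂ y - g₁ y := by
    intro y
    have h12 : g₁ y ≤ g₂ y := (hsq y).1.trans (hsq y).2
    rcases le_total (g₁ y) 0 with h | h
    · rcases le_total (g₂ y) 0 with h' | h'
      · rw [max_eq_right h, max_eq_right h']; linarith
      · rw [max_eq_right h, max_eq_left h']; linarith
    · rw [max_eq_left h, max_eq_left (h.trans h12)]
  have ia : Integrable (fun y => max (g₂ y) 0 - max (g₁ y) 0) θ :=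
    (cts_int (hc₂.max continuous_const)
        (hcs_of_support_subset hs₂ (fun y hy => by
          simp only [Function.mem_support] at hy ⊢; intro h0; simp [h0] at hy))).sub
      (cts_int (hc₁.max continuous_const)
        (hcs_of_support_subset hs₁ (fun y hy => by
          simp only [Function.mem_support] at hy ⊢; intro h0; simp [h0] at hy)))
  have ib : Integrable (fun y => g₂ y - g₁ y) θ := (cts_int hc₂ hs₂).sub (cts_int hc₁ hs₁)
  exact (integral_mono ia ib key).trans hi

private lemma RiemannIntegrableR.mul_nonneg {u v : H → ℝ} (hu : RiemannIntegrableR θ u)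
    (hv : RiemannIntegrableR θ v) (hu0 : ∀ y, 0 ≤ u y) (hv0 : ∀ y, 0 ≤ v y) :
    RiemannIntegrableR θ (fun y => u y * v y) := by
  obtain ⟨Ku, Mu, -, hMu0, -, hMu⟩ := hu.bound
  obtain ⟨Kv, Mv, -, hMv0, -, hMv⟩ := hv.bound
  intro ε hε
  have hden : (0:ℝ) < Mu + Mv + 1 := by linarith
  set δ := ε / (Mu + Mv + 1) with hδdef
  have hδ : 0 < δ := div_pos hε hden
  obtain ⟨g₁, g₂, hc₁, hc₂, hs₁, hs₂, hsq, hi⟩ := hu δ hδ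
  obtain ⟨k₁, k₂, hd₁, hd₂, ht₁, ht₂, hsq', hi'⟩ := hv δ hδ
  -- clamped versions
  set G₁ : H → ℝ := fun y => max (g₁ y) 0 with hG₁
  set G₂ : H → ℝ := fun y => min (g₂ y) Mu with hG₂
  set K₁ : H → ℝ := fun y => max (k₁ y) 0 with hK₁
  set K₂ : H → ℝ := fun y => min (k₂ y) Mv with hK₂
  have hG₁c : Continuous G₁ := hc₁.max continuous_const
  have hG₂c : Continuous G₂ := hc₂.min continuous_const
  have hK₁c : Continuous K₁ := hd₁.max continuous_const
  have hK₂c : Continuous K₂ := hd₂.min continuous_const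
  have hG₁s : HasCompactSupport G₁ := hcs_of_support_subset hs₁ (fun y hy => by
    simp only [Function.mem_support, hG₁] at hy ⊢; intro h0; simp [h0] at hy)
  have hG₂s : HasCompactSupport G₂ := hcs_of_support_subset hs₂ (fun y hy => by
    simp only [Function.mem_support, hG₂] at hy ⊢; intro h0; simp [h0, hMu0] at hy)
  have hK₁s : HasCompactSupport K₁ := hcs_of_support_subset ht₁ (fun y hy => by
    simp only [Function.mem_support, hK₁] at hy ⊢; intro h0; simp [h0] at hy)
  have hK₂s : HasCompactSupport K₂ := hcs_of_support_subset ht₂ (fun y hy => by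
    simp only [Function.mem_support, hK₂] at hy ⊢; intro h0; simp [h0, hMv0] at hy)
  have hG : ∀ y, 0 ≤ G₁ y ∧ G₁ y ≤ u y ∧ u y ≤ G₂ y ∧ G₂ y ≤ Mu := fun y =>
    ⟨le_max_right _ _, max_le (hsq y).1 (hu0 y),
      le_min (hsq y).2 (le_of_abs_le (by simpa using hMu y)), min_le_right _ _⟩
  have hK : ∀ y, 0 ≤ K₁ y ∧ K₁ y ≤ v y ∧ v y ≤ K₂ y ∧ K₂ y ≤ Mv := fun y =>
    ⟨le_max_right _ _, max_le (hsq' y).1 (hv0 y),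
      le_min (hsq' y).2 (le_of_abs_le (by simpa using hMv y)), min_le_right _ _⟩
  refine ⟨fun y => G₁ y * K₁ y, fun y => G₂ y * K₂ y, hG₁c.mul hK₁c, hG₂c.mul hK₂c,
    hG₁s.mul_right, hG₂s.mul_right, fun y => ?_, ?_⟩
  · obtain ⟨hg0, hg1, hg2, hg3⟩ := hG y
    obtain ⟨hk0, hk1, hk2, hk3⟩ := hK y
    constructor
    · exact mul_le_mul hg1 hk1 hk0 (hu0 y)
    · exact mul_le_mul hg2 hk2 (hv0 y) ((hu0 y).trans hg2)
  · have key : ∀ y, G₂ y * K₂ y - G₁ y * K₁ y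
        ≤ Mu * (k₂ y - k₁ y) + Mv * (g₂ y - g₁ y) := by
      intro y
      obtain ⟨hg0, hg1, hg2, hg3⟩ := hG y
      obtain ⟨hk0, hk1, hk2, hk3⟩ := hK y
      have e1 : G₂ y * K₂ y - G₁ y * K₁ y
          = G₂ y * (K₂ y - K₁ y) + K₁ y * (G₂ y - G₁ y) := by ring
      have h2 : G₂ y * (K₂ y - K₁ y) ≤ Mu * (K₂ y - K₁ y) :=
        mul_le_mul_of_nonneg_right hg3 (by linarith [hk1.trans hk2])
      have h3 : K₁ y * (G₂ y - G₁ y) ≤ Mv * (G₂ y - G₁ y) :=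
        mul_le_mul_of_nonneg_right (hk1.trans ((hk2).trans hk3)) (by linarith [hg1.trans hg2])
      have h4 : K₂ y - K₁ y ≤ k₂ y - k₁ y := by
        have : K₂ y ≤ k₂ y := min_le_left _ _
        have : k₁ y ≤ K₁ y := le_max_left _ _
        simp only [hK₁, hK₂]
        have := min_le_left (k₂ y) Mv
        have := le_max_left (k₁ y) (0:ℝ)
        linarith
      have h5 : G₂ y - G₁ y ≤ g₂ y - g₁ y := by
        have := min_le_left (g₂ y) Mu
        have := le_max_left (g₁ y) (0:ℝ)
        simp only [hG₁, hG₂]; linarith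
      have h6 : Mu * (K₂ y - K₁ y) ≤ Mu * (k₂ y - k₁ y) :=
        mul_le_mul_of_nonneg_left h4 hMu0
      have h7 : Mv * (G₂ y - G₁ y) ≤ Mv * (g₂ y - g₁ y) :=
        mul_le_mul_of_nonneg_left h5 hMv0
      linarith
    have hintL : Integrable (fun y => G₂ y * K₂ y - G₁ y * K₁ y) θ :=
      (cts_int (hG₂c.mul hK₂c) hG₂s.mul_right).sub (cts_int (hG₁c.mul hK₁c) hG₁s.mul_right)
    have hintk : Integrable (fun y => k₂ y - k₁ y) θ :=
      (cts_int hd₂ ht₂).sub (cts_int hd₁ ht₁)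
    have hintg : Integrable (fun y => g₂ y - g₁ y) θ :=
      (cts_int hc₂ hs₂).sub (cts_int hc₁ hs₁)
    have hintR : Integrable (fun y => Mu * (k₂ y - k₁ y) + Mv * (g₂ y - g₁ y)) θ :=
      (hintk.const_mul Mu).add (hintg.const_mul Mv)
    calc ∫ y, (G₂ y * K₂ y - G₁ y * K₁ y) ∂θ
        ≤ ∫ y, (Mu * (k₂ y - k₁ y) + Mv * (g₂ y - g₁ y)) ∂θ :=
          integral_mono hintL hintR key
      _ = Mu * ∫ y, (k₂ y - k₁ y) ∂θ + Mv * ∫ y, (g₂ y - g₁ y) ∂θ := by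
          rw [integral_add (hintk.const_mul Mu) (hintg.const_mul Mv),
            integral_const_mul, integral_const_mul]
      _ ≤ Mu * δ + Mv * δ := by
          have := mul_le_mul_of_nonneg_left hi' hMu0
          have := mul_le_mul_of_nonneg_left hi hMv0
          linarith
      _ ≤ ε := by
          rw [hδdef]
          rw [div_eq_inv_mul]
          have h8 : Mu * ((Mu+Mv+1)⁻¹ * ε) + Mv * ((Mu+Mv+1)⁻¹ * ε)
              = ((Mu + Mv) / (Mu+Mv+1)) * ε := by field_simp
          rw [h8]
          have h9 : (Mu + Mv) / (Mu+Mv+1) ≤ 1 := by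
            rw [div_le_one hden]; linarith
          nlinarith

private lemma RiemannIntegrableR.mul {u v : H → ℝ} (hu : RiemannIntegrableR θ u)
    (hv : RiemannIntegrableR θ v) : RiemannIntegrableR θ (fun y => u y * v y) := by
  have hpp : ∀ a : ℝ, max a 0 - max (-a) 0 = a := by
    intro a
    rcases le_total a 0 with h | h
    · rw [max_eq_right h, max_eq_left (neg_nonneg.2 h)]; ring
    · rw [max_eq_left h, max_eq_right (neg_nonpos.2 h)]; ring
  have t1 : RiemannIntegrableR θ (fun y => max (u y) 0 * max (v y) 0) :=
    hu.posPart.mul_nonneg hv.posPart (fun y => le_max_right _ _) (fun y => le_max_right _ _)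
  have t2 : RiemannIntegrableR θ (fun y => max (-u y) 0 * max (-v y) 0) :=
    hu.neg.posPart.mul_nonneg hv.neg.posPart (fun y => le_max_right _ _) (fun y => le_max_right _ _)
  have t3 : RiemannIntegrableR θ (fun y => max (u y) 0 * max (-v y) 0) :=
    hu.posPart.mul_nonneg hv.neg.posPart (fun y => le_max_right _ _) (fun y => le_max_right _ _)
  have t4 : RiemannIntegrableR θ (fun y => max (-u y) 0 * max (v y) 0) :=
    hu.neg.posPart.mul_nonneg hv.posPart (fun y => le_max_right _ _) (fun y => le_max_right _ _)
  have key : (fun y => u y * v y) = fun y =>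
      (max (u y) 0 * max (v y) 0 + max (-u y) 0 * max (-v y) 0) +
        -(max (u y) 0 * max (-v y) 0 + max (-u y) 0 * max (v y) 0) := by
    funext y
    have h1 := hpp (u y); have h2 := hpp (v y)
    have : u y * v y = (max (u y) 0 - max (-u y) 0) * (max (v y) 0 - max (-v y) 0) := by
      rw [h1, h2]
    rw [this]; ring
  rw [key]
  exact (t1.add t2).add (t3.add t4).neg

private lemma RiemannIntegrableR.comp_sub {H' : Type*} [AddCommGroup H'] [TopologicalSpace H']
    [IsTopologicalAddGroup H'] [MeasurableSpace H'] [BorelSpace H'] {θ' : Measure H'}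
    [IsFiniteMeasureOnCompacts θ'] [θ'.IsAddRightInvariant]
    {u : H' → ℝ} (hu : RiemannIntegrableR θ' u) (z : H') :
    RiemannIntegrableR θ' (fun y => u (y - z)) := by
  intro ε hε
  obtain ⟨g₁, g₂, hc₁, hc₂, hs₁, hs₂, hsq, hi⟩ := hu ε hε
  have hcont : Continuous (fun y : H' => y - z) := continuous_id.sub continuous_const
  refine ⟨fun y => g₁ (y - z), fun y => g₂ (y - z), hc₁.comp hcont, hc₂.comp hcont,
    hs₁.comp_homeomorph (Homeomorph.subRight z), hs₂.comp_homeomorph (Homeomorph.subRight z),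
    fun y => hsq (y - z), ?_⟩
  have : ∫ y, (g₂ (y - z) - g₁ (y - z)) ∂θ' = ∫ y, (g₂ y - g₁ y) ∂θ' :=
    integral_sub_right_eq_self (fun y => g₂ y - g₁ y) z
  rw [this]; exact hi

private lemma RiemannIntegrable.bound {h : H → ℂ} (hh : RiemannIntegrable θ h) :
    ∃ (K : Set H) (M : ℝ), IsCompact K ∧ 0 < M ∧ (∀ y, y ∉ K → h y = 0) ∧ ∀ y, ‖h y‖ ≤ M := by
  obtain ⟨K₁, M₁, hK₁, hM₁0, hK₁0, hM₁⟩ := hh.1.bound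
  obtain ⟨K₂, M₂, hK₂, hM₂0, hK₂0, hM₂⟩ := hh.2.bound
  refine ⟨K₁ ∪ K₂, M₁ + M₂ + 1, hK₁.union hK₂, by linarith, fun y hy => ?_, fun y => ?_⟩
  · have h1 : (h y).re = 0 := hK₁0 y (fun m => hy (Or.inl m))
    have h2 : (h y).im = 0 := hK₂0 y (fun m => hy (Or.inr m))
    exact Complex.ext h1 h2
  · have := Complex.norm_le_abs_re_add_abs_im (h y)
    have h1 := hM₁ y; have h2 := hM₂ y
    have : ‖h y‖ ≤ |(h y).re| + |(h y).im| := this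
    linarith

private lemma RiemannIntegrable.mul_conj_translate {H' : Type*} [AddCommGroup H']
    [TopologicalSpace H'] [IsTopologicalAddGroup H'] [MeasurableSpace H'] [BorelSpace H']
    {θ' : Measure H'} [IsFiniteMeasureOnCompacts θ'] [θ'.IsAddRightInvariant]
    {h : H' → ℂ} (hh : RiemannIntegrable θ' h) (z : H') :
    RiemannIntegrable θ' (fun y => h y * (starRingEnd ℂ) (h (y - z))) := by
  constructor
  · have he : (fun y => (h y * (starRingEnd ℂ) (h (y - z))).re)
        = fun y => (h y).re * (h (y - z)).re + (h y).im * (h (y - z)).im := by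
      funext y
      simp only [Complex.mul_re, Complex.conj_re, Complex.conj_im]
      ring
    rw [he]
    exact (hh.1.mul (hh.1.comp_sub z)).add (hh.2.mul (hh.2.comp_sub z))
  · have he : (fun y => (h y * (starRingEnd ℂ) (h (y - z))).im)
        = fun y => (h y).im * (h (y - z)).re + -((h y).re * (h (y - z)).im) := by
      funext y
      simp only [Complex.mul_im, Complex.conj_re, Complex.conj_im]
      ring
    rw [he]
    exact (hh.2.mul (hh.1.comp_sub z)).add ((hh.1.mul (hh.2.comp_sub z)).neg)

end AuxRI

section AuxGeom

variable {G : Type*} [AddCommGroup G] [TopologicalSpace G] [IsTopologicalAddGroup G]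

private lemma diff_vadd_add_subset_vhBoundary {V C : Set G} (hVC : V ⊆ C)
    (t : G) (A : Set G) :
    (A \ (t +ᵥ A)) + V ⊆ vhBoundary (C ∪ (t +ᵥ C)) A := by
  rintro x hx
  rw [Set.mem_add] at hx
  obtain ⟨a, ha, v, hv, rfl⟩ := hx
  have ha1 : a ∈ A := ha.1
  have ha2 : -t + a ∈ Aᶜ := by
    intro hmem
    exact ha.2 (Set.mem_vadd_set_iff_neg_vadd_mem.2 hmem)
  by_cases hc : a + v ∈ closure A
  · refine Or.inr ⟨?_, hc⟩
    rw [Set.mem_add]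
    exact ⟨t + v, Or.inr ⟨v, hVC hv, rfl⟩, -t + a, subset_closure ha2, by abel⟩
  · refine Or.inl ⟨?_, ?_⟩
    · rw [Set.mem_add]
      exact ⟨v, Or.inl (hVC hv), a, subset_closure ha1, by abel⟩
    · exact subset_closure (fun hmem => hc (subset_closure hmem))

private lemma vhBoundary_subset_compact (U W : Set G) :
    vhBoundary U W ⊆ (U + closure W) ∪ closure W := by
  rintro x (hx | hx)
  · exact Or.inl hx.1
  · exact Or.inr hx.2

end AuxGeom

section AuxLatt

variable {G H : Type*}
    [AddCommGroup G] [TopologicalSpace G] [IsTopologicalAddGroup G] [LocallyCompactSpace G]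
    [AddCommGroup H] [TopologicalSpace H] [IsTopologicalAddGroup H] [LocallyCompactSpace H]

private lemma exists_sep_nbhds (L : AddSubgroup (G × H)) [DiscreteTopology L] :
    ∃ (VG : Set G) (VH : Set H) (CG : Set G) (CH : Set H),
      IsOpen VG ∧ IsOpen VH ∧ (0:G) ∈ VG ∧ (0:H) ∈ VH ∧ IsCompact CG ∧ IsCompact CH ∧
      VG ⊆ CG ∧ VH ⊆ CH ∧
      ∀ p q : L, ((p:G×H).1 - (q:G×H).1 ∈ VG - VG) → ((p:G×H).2 - (q:G×H).2 ∈ VH - VH) →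
        p = q := by
  -- a neighborhood of 0 isolating the lattice
  have hop : IsOpen ({0} : Set L) := isOpen_discrete _
  rw [isOpen_induced_iff] at hop
  obtain ⟨U, hUo, hUe⟩ := hop
  have hU0 : (0 : G × H) ∈ U := by
    have : (0 : L) ∈ (Subtype.val ⁻¹' U : Set L) := by rw [hUe]; rfl
    exact this
  have hUiso : ∀ p : L, (p : G × H) ∈ U → p = 0 := by
    intro p hp
    have : p ∈ (Subtype.val ⁻¹' U : Set L) := hp
    rwa [hUe, Set.mem_singleton_iff] at this
  -- shrink: W with W - W ⊆ U
  have hm : Continuous (fun x : (G × H) × (G × H) => x.1 - x.2) :=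
    continuous_fst.sub continuous_snd
  have hpre : (fun x : (G × H) × (G × H) => x.1 - x.2) ⁻¹' U ∈
      nhds ((0 : G × H), (0 : G × H)) :=
    (hUo.preimage hm).mem_nhds (by simpa using hU0)
  rw [nhds_prod_eq, Filter.mem_prod_iff] at hpre
  obtain ⟨W₁, hW₁, W₂, hW₂, hWsub⟩ := hpre
  have hW : W₁ ∩ W₂ ∈ nhds (0 : G × H) := Filter.inter_mem hW₁ hW₂
  -- product basis inside W₁ ∩ W₂
  have h00 : (0 : G × H) = ((0 : G), (0 : H)) := rfl
  rw [h00, nhds_prod_eq, Filter.mem_prod_iff] at hW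
  obtain ⟨SG, hSG, SH, hSH, hSsub⟩ := hW
  obtain ⟨CG, hCGc, hCGn⟩ := exists_compact_mem_nhds (0 : G)
  obtain ⟨CH, hCHc, hCHn⟩ := exists_compact_mem_nhds (0 : H)
  refine ⟨interior SG ∩ interior CG, interior SH ∩ interior CH, CG, CH,
    (isOpen_interior.inter isOpen_interior), (isOpen_interior.inter isOpen_interior),
    ⟨mem_interior_iff_mem_nhds.2 hSG, mem_interior_iff_mem_nhds.2 hCGn⟩,
    ⟨mem_interior_iff_mem_nhds.2 hSH, mem_interior_iff_mem_nhds.2 hCHn⟩,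
    hCGc, hCHc, (Set.inter_subset_right).trans interior_subset,
    (Set.inter_subset_right).trans interior_subset, ?_⟩
  intro p q h1 h2
  rw [Set.mem_sub] at h1 h2
  obtain ⟨a, ha, b, hb, hab⟩ := h1
  obtain ⟨c, hc, d, hd, hcd⟩ := h2
  have hmem : ((p : G × H) - (q : G × H)) ∈ U := by
    have hac : ((a, c) : G × H) ∈ W₁ ∩ W₂ :=
      hSsub ⟨interior_subset ha.1, interior_subset hc.1⟩
    have hbd : ((b, d) : G × H) ∈ W₁ ∩ W₂ :=
      hSsub ⟨interior_subset hb.1, interior_subset hd.1⟩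
    have hmemp : (((a, c), (b, d)) : (G × H) × (G × H)) ∈ W₁ ×ˢ W₂ := ⟨hac.1, hbd.2⟩
    have hmem2 : ((a, c) : G × H) - ((b, d) : G × H) ∈ U := hWsub hmemp
    have heq : (p : G × H) - (q : G × H) = ((a, c) : G × H) - ((b, d) : G × H) := by
      apply Prod.ext
      · simp only [Prod.fst_sub]; exact hab.symm
      · simp only [Prod.snd_sub]; exact hcd.symm
    rw [heq]
    exact hmem2
  have : ((p - q : L) : G × H) ∈ U := by push_cast; exact hmem
  have := hUiso _ this
  exact sub_eq_zero.1 (by exact_mod_cast congrArg (Subtype.val) this)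

private lemma finite_latt (L : AddSubgroup (G × H))
    {VG : Set G} {VH : Set H} (hVGo : IsOpen VG) (hVHo : IsOpen VH)
    (h0G : (0:G) ∈ VG) (h0H : (0:H) ∈ VH)
    (hsep : ∀ p q : L, ((p:G×H).1 - (q:G×H).1 ∈ VG - VG) →
      ((p:G×H).2 - (q:G×H).2 ∈ VH - VH) → p = q)
    {KG : Set G} {KH : Set H} (hKG : IsCompact KG) (hKH : IsCompact KH) :
    {q : L | (q:G×H).1 ∈ KG ∧ (q:G×H).2 ∈ KH}.Finite := by
  have hK : IsCompact (KG ×ˢ KH) := hKG.prod hKH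
  have hV : IsOpen (VG ×ˢ VH) := hVGo.prod hVHo
  obtain ⟨t, -, ht⟩ := hK.elim_nhds_subcover (fun x : G × H => x +ᵥ (VG ×ˢ VH))
    (fun x _ => (hV.vadd x).mem_nhds ⟨((0:G),(0:H)), ⟨h0G, h0H⟩, by simp⟩)
  have hss : ∀ x : G × H, {q : L | (q:G×H) ∈ x +ᵥ (VG ×ˢ VH)}.Subsingleton := by
    intro x q hq r hr
    obtain ⟨v, hv, hveq⟩ := hq
    obtain ⟨w, hw, hweq⟩ := hr
    refine hsep q r ?_ ?_
    · rw [Set.mem_sub]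
      refine ⟨v.1, hv.1, w.1, hw.1, ?_⟩
      have h1 : (q : G × H).1 = x.1 + v.1 := by rw [← hveq]; rfl
      have h2 : (r : G × H).1 = x.1 + w.1 := by rw [← hweq]; rfl
      rw [h1, h2]; abel
    · rw [Set.mem_sub]
      refine ⟨v.2, hv.2, w.2, hw.2, ?_⟩
      have h1 : (q : G × H).2 = x.2 + v.2 := by rw [← hveq]; rfl
      have h2 : (r : G × H).2 = x.2 + w.2 := by rw [← hweq]; rfl
      rw [h1, h2]; abel
  have hfin := Set.Finite.biUnion t.finite_toSet (fun x _ => (hss x).finite)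
  refine hfin.subset (fun q hq => ?_)
  have := ht ⟨hq.1, hq.2⟩
  simp only [Set.mem_iUnion] at this ⊢
  obtain ⟨x, hxt, hx⟩ := this
  exact ⟨x, hxt, hx⟩

variable [MeasurableSpace G] [BorelSpace G] [MeasurableSpace H] [BorelSpace H]

private lemma packing_bound (θG : Measure G) [θG.IsAddHaarMeasure] [SigmaFinite θG]
    (θH : Measure H) [θH.IsAddHaarMeasure] [SigmaFinite θH]
    (L : AddSubgroup (G × H))
    {VG : Set G} {VH : Set H} (hVGo : IsOpen VG) (hVHo : IsOpen VH)
    (hsep : ∀ p q : L, ((p:G×H).1 - (q:G×H).1 ∈ VG - VG) →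
      ((p:G×H).2 - (q:G×H).2 ∈ VH - VH) → p = q)
    (E : Finset L) {S : Set G} {T : Set H}
    (hE : ∀ q ∈ E, (q:G×H).1 ∈ S ∧ (q:G×H).2 ∈ T) :
    (E.card : ℝ≥0∞) * (θG VG * θH VH) ≤ θG (S + VG) * θH (T + VH) := by
  set μ := θG.prod θH with hμ
  have hdisj : (E : Set L).PairwiseDisjoint (fun q : L => (q:G×H) +ᵥ (VG ×ˢ VH)) := by
    intro q _ r _ hne
    refine Set.disjoint_left.2 fun x hxq hxr => hne ?_
    obtain ⟨v, hv, hveq⟩ := hxq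
    obtain ⟨w, hw, hweq⟩ := hxr
    have h1 : (q : G × H) + v = (r : G × H) + w := hveq.trans hweq.symm
    refine hsep q r ?_ ?_
    · rw [Set.mem_sub]
      refine ⟨w.1, hw.1, v.1, hv.1, ?_⟩
      have h2 : (q : G × H).1 + v.1 = (r : G × H).1 + w.1 := by
        have := congrArg Prod.fst h1
        simpa using this
      rw [sub_eq_sub_iff_add_eq_add, add_comm, h2, add_comm]
    · rw [Set.mem_sub]
      refine ⟨w.2, hw.2, v.2, hv.2, ?_⟩
      have h2 : (q : G × H).2 + v.2 = (r : G × H).2 + w.2 := by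
        have := congrArg Prod.snd h1
        simpa using this
      rw [sub_eq_sub_iff_add_eq_add, add_comm, h2, add_comm]
  have hprodeq : ∀ q : G × H, (q +ᵥ (VG ×ˢ VH)) = (q.1 +ᵥ VG) ×ˢ (q.2 +ᵥ VH) := by
    intro q
    ext x
    constructor
    · rintro ⟨v, ⟨hv1, hv2⟩, rfl⟩
      exact ⟨⟨v.1, hv1, rfl⟩, ⟨v.2, hv2, rfl⟩⟩
    · rintro ⟨⟨a, ha, ha'⟩, ⟨b, hb, hb'⟩⟩
      exact ⟨(a, b), ⟨ha, hb⟩, Prod.ext ha' hb'⟩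
  have hmeas : ∀ q ∈ E, MeasurableSet ((q:G×H) +ᵥ (VG ×ˢ VH)) := by
    intro q _
    rw [hprodeq]
    exact ((hVGo.vadd _).measurableSet).prod ((hVHo.vadd _).measurableSet)
  have hsum := measure_biUnion_finset (μ := μ) hdisj hmeas
  have hval : ∀ q : L, μ ((q:G×H) +ᵥ (VG ×ˢ VH)) = θG VG * θH VH := by
    intro q
    rw [hprodeq, hμ, Measure.prod_prod, measure_vadd, measure_vadd]
  have hsub : (⋃ q ∈ E, (q:G×H) +ᵥ (VG ×ˢ VH)) ⊆ (S + VG) ×ˢ (T + VH) := by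
    intro x hx
    simp only [Set.mem_iUnion] at hx
    obtain ⟨q, hqE, v, hv, hveq⟩ := hx
    rw [← hveq]
    exact ⟨Set.add_mem_add (hE q hqE).1 hv.1, Set.add_mem_add (hE q hqE).2 hv.2⟩
  calc (E.card : ℝ≥0∞) * (θG VG * θH VH)
      = ∑ _q ∈ E, (θG VG * θH VH) := by rw [Finset.sum_const, nsmul_eq_mul]
    _ = ∑ q ∈ E, μ ((q:G×H) +ᵥ (VG ×ˢ VH)) := Finset.sum_congr rfl (fun q _ => (hval q).symm)
    _ = μ (⋃ q ∈ E, (q:G×H) +ᵥ (VG ×ˢ VH)) := hsum.symm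
    _ ≤ μ ((S + VG) ×ˢ (T + VH)) := measure_mono hsub
    _ = θG (S + VG) * θH (T + VH) := by rw [hμ, Measure.prod_prod]

end AuxLatt

set_option maxHeartbeats 2000000 in
/-- Autocorrelation of weighted model sets: in a cut-and-project
scheme `(G, H, ℒ)` with `G` σ-compact satisfying the density formula, for every Riemann
integrable `h : H → ℂ`, the finite autocorrelation measures
`(1/θ_G(A n)) (ω_h|_{A n}) * (ω_h|_{A n})~` converge vaguely, for every van Hove
sequence `(A n)`, to `dens(ℒ) ⬝ ω_{h * h̃}`. -/
theorem autocorrelation_weighted_model_set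
    {G H : Type*}
    [AddCommGroup G] [TopologicalSpace G] [IsTopologicalAddGroup G] [LocallyCompactSpace G]
    [SigmaCompactSpace G] [MeasurableSpace G] [BorelSpace G]
    [AddCommGroup H] [TopologicalSpace H] [IsTopologicalAddGroup H] [LocallyCompactSpace H]
    [MeasurableSpace H] [BorelSpace H]
    (θG : Measure G) [θG.IsAddHaarMeasure] (θH : Measure H) [θH.IsAddHaarMeasure]
    [SigmaFinite θG] [SigmaFinite θH]
    (L : AddSubgroup (G × H)) [DiscreteTopology L] [CompactSpace ((G × H) ⧸ L)]
    (F : Set (G × H)) (hF : IsAddFundamentalDomain L F (θG.prod θH))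
    (hF0 : (θG.prod θH) F ≠ 0) (hFtop : (θG.prod θH) F ≠ ⊤)
    -- the density formula holds in `(G, H, ℒ)`:
    (hDF : ∀ g : H → ℂ, RiemannIntegrable θH g → ∀ B : ℕ → Set G, IsVanHove θG B →
      TendstoUniformly
        (fun n t => ((θG (B n)).toReal)⁻¹ •
          ∑' q : L, (t +ᵥ B n).indicator (fun _ => g (q : G × H).2) (q : G × H).1)
        (fun _ : G => ((((θG.prod θH) F).toReal)⁻¹ : ℝ) • ∫ y, g y ∂θH) atTop)
    (h : H → ℂ) (hh : RiemannIntegrable θH h)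
    (A : ℕ → Set G) (hA : IsVanHove θG A) :
    ∀ f : G → ℂ, Continuous f → HasCompactSupport f →
      Tendsto
        (fun n => ((θG (A n)).toReal)⁻¹ •
          ∑' q : L, ∑' r : L,
            (A n).indicator (fun _ => h (q : G × H).2) (q : G × H).1 *
              (starRingEnd ℂ) ((A n).indicator (fun _ => h (r : G × H).2) (r : G × H).1) *
              f ((q : G × H).1 - (r : G × H).1))
        atTop
        (nhds (((((θG.prod θH) F).toReal)⁻¹ : ℝ) •
          ∑' q : L, (∫ y, h y * (starRingEnd ℂ) (h (y - (q : G × H).2)) ∂θH) *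
            f (q : G × H).1)) := by
  intro f hf hfc
  classical
  obtain ⟨hAcomp, hApos, hAfin, hAvh⟩ := hA
  obtain ⟨Kh, M, hKhc, hM0, hKh0, hM⟩ := RiemannIntegrable.bound hh
  obtain ⟨VG, VH, CG, CH, hVGo, hVHo, h0G, h0H, hCGc, hCHc, hVCG, hVCH, hsep⟩ :=
    exists_sep_nbhds L
  set c : ℝ := (((θG.prod θH) F).toReal)⁻¹ with hc
  -- the weight function
  set ind : ℕ → L → ℂ := fun n q => (A n).indicator (fun _ => h (q : G × H).2) (q : G × H).1
    with hind
  have hind0 : ∀ n (q : L), ind n q ≠ 0 → (q : G × H).1 ∈ A n ∧ (q : G × H).2 ∈ Kh := by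
    intro n q hq
    by_cases hmem : (q : G × H).1 ∈ A n
    · refine ⟨hmem, ?_⟩
      by_contra hk
      exact hq (by rw [hind]; simp only [Set.indicator_of_mem hmem]; exact hKh0 _ hk)
    · exact absurd (by rw [hind]; simp only [Set.indicator_of_notMem hmem]) hq
  -- finite index sets
  set Eset : ℕ → Set L := fun n => {q : L | (q : G × H).1 ∈ A n ∧ (q : G × H).2 ∈ Kh}
    with hEset
  have hEfin : ∀ n, (Eset n).Finite := fun n =>
    finite_latt L hVGo hVHo h0G h0H hsep (hAcomp n) hKhc
  have hKhsub : IsCompact (Kh - Kh) := by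
    rw [sub_eq_add_neg]; exact hKhc.add hKhc.neg
  set Pset : Set L := {p : L | (p : G × H).1 ∈ tsupport f ∧ (p : G × H).2 ∈ Kh - Kh}
    with hPset
  have hPfin : Pset.Finite := finite_latt L hVGo hVHo h0G h0H hsep hfc hKhsub
  set PF : Finset L := hPfin.toFinset with hPF
  -- the limit candidates per p
  set gfun : L → H → ℂ := fun p y => h y * (starRingEnd ℂ) (h (y - (p : G × H).2)) with hgfun
  set Wfun : ℕ → L → ℂ := fun n p => ∑' q : L, ind n q * (starRingEnd ℂ) (ind n (q - p))
    with hWfun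
  -- Step 1 : rewrite the autocorrelation sums as finite sums over PF
  have claim1 : ∀ n, (∑' q : L, ∑' r : L,
      (A n).indicator (fun _ => h (q : G × H).2) (q : G × H).1 *
        (starRingEnd ℂ) ((A n).indicator (fun _ => h (r : G × H).2) (r : G × H).1) *
          f ((q : G × H).1 - (r : G × H).1))
      = ∑ p ∈ PF, f (p : G × H).1 * Wfun n p := by
    intro n
    set T : L × L → ℂ := fun x =>
      ind n x.1 * (starRingEnd ℂ) (ind n x.2) * f ((x.1 : G × H).1 - (x.2 : G × H).1) with hT
    have hTsupp : Function.support T ⊆ (Eset n) ×ˢ (Eset n) := by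
      intro x hx
      simp only [Function.mem_support, hT] at hx
      have h1 : ind n x.1 ≠ 0 := fun h0 => hx (by rw [h0]; ring)
      have h2 : ind n x.2 ≠ 0 := fun h0 => hx (by rw [h0]; simp)
      exact ⟨hind0 n x.1 h1, hind0 n x.2 h2⟩
    have hTfin : (Function.support T).Finite :=
      Set.Finite.subset ((hEfin n).prod (hEfin n)) hTsupp
    have hTsumm : Summable T := summable_of_finite_support hTfin
    have hslice : ∀ q : L, Summable fun r : L => T (q, r) := by
      intro q
      apply summable_of_finite_support
      apply Set.Finite.subset (hEfin n)
      intro r hr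
      exact (hTsupp hr).2
    have h1 : (∑' q : L, ∑' r : L, T (q, r)) = ∑' x : L × L, T x :=
      (Summable.tsum_prod' hTsumm hslice).symm
    -- reindex by the difference
    set e : L × L ≃ L × L :=
      ⟨fun y => (y.2, y.2 - y.1), fun z => (z.1 - z.2, z.1),
        fun y => by simp, fun z => by simp⟩ with he
    have h2 : (∑' x : L × L, T x) = ∑' y : L × L, T (y.2, y.2 - y.1) :=
      (Equiv.tsum_eq e T).symm
    have hT'supp : Function.support (fun y : L × L => T (y.2, y.2 - y.1)) ⊆
        ((fun y : L × L => (e y : L × L)) ⁻¹' ((Eset n) ×ˢ (Eset n))) := fun y hy =>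
      hTsupp hy
    have hT'fin : (Function.support (fun y : L × L => T (y.2, y.2 - y.1))).Finite := by
      have : Summable (fun y : L × L => T (y.2, y.2 - y.1)) := e.summable_iff.2 hTsumm
      -- direct: support finite since injective preimage of finite set
      apply Set.Finite.subset (Set.Finite.preimage (f := (e : L × L → L × L))
        (e.injective.injOn) ((hEfin n).prod (hEfin n)))
      exact hT'supp
    have h3 : (∑' y : L × L, T (y.2, y.2 - y.1)) = ∑' p : L, ∑' q : L, T (q, q - p) :=
      Summable.tsum_prod' (summable_of_finite_support hT'fin)
        (fun p => summable_of_finite_support (Set.Finite.subset (hEfin n)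
          (fun q hq => (hTsupp hq).1)))
    have h4 : ∀ p : L, (∑' q : L, T (q, q - p)) = f (p : G × H).1 * Wfun n p := by
      intro p
      have hterm : ∀ q : L, T (q, q - p)
          = (ind n q * (starRingEnd ℂ) (ind n (q - p))) * f (p : G × H).1 := by
        intro q
        have hco : ((q - p : L) : G × H) = (q : G × H) - (p : G × H) := rfl
        have harg : (q : G × H).1 - ((q - p : L) : G × H).1 = (p : G × H).1 := by
          rw [hco, Prod.fst_sub]; abel
        rw [hT]
        simp only
        rw [harg]
      rw [tsum_congr hterm, tsum_mul_right, hWfun]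
      ring
    rw [show (∑' q : L, ∑' r : L,
        (A n).indicator (fun _ => h (q : G × H).2) (q : G × H).1 *
          (starRingEnd ℂ) ((A n).indicator (fun _ => h (r : G × H).2) (r : G × H).1) *
            f ((q : G × H).1 - (r : G × H).1)) = ∑' q : L, ∑' r : L, T (q, r) from rfl,
      h1, h2, h3, tsum_congr h4]
    -- now reduce the tsum over p to the finite sum over PF
    apply tsum_eq_sum
    intro p hp
    rw [hPF, Set.Finite.mem_toFinset] at hp
    by_cases h1' : (p : G × H).1 ∈ tsupport f
    · have h2' : (p : G × H).2 ∉ Kh - Kh := fun hk => hp ⟨h1', hk⟩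
      have hWzero : Wfun n p = 0 := by
        rw [hWfun]
        simp only
        have : ∀ q : L, ind n q * (starRingEnd ℂ) (ind n (q - p)) = 0 := by
          intro q
          by_cases hq1 : ind n q = 0
          · rw [hq1]; ring
          · by_cases hq2 : ind n (q - p) = 0
            · rw [hq2]; simp
            · exfalso
              have hk1 : (q : G × H).2 ∈ Kh := (hind0 n q hq1).2
              have hk2 : ((q - p : L) : G × H).2 ∈ Kh := (hind0 n _ hq2).2
              have hco : ((q - p : L) : G × H).2 = (q : G × H).2 - (p : G × H).2 := rfl
              apply h2'
              have := Set.sub_mem_sub hk1 (hco ▸ hk2)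
              simpa using this
        rw [tsum_congr this, tsum_zero]
      rw [hWzero, mul_zero]
    · rw [image_eq_zero_of_notMem_tsupport h1', zero_mul]
  -- Step 2 : rewrite the limit tsum as a finite sum over PF
  have claim2 : (∑' p : L, (∫ y, h y * (starRingEnd ℂ) (h (y - (p : G × H).2)) ∂θH) *
      f (p : G × H).1)
      = ∑ p ∈ PF, (∫ y, gfun p y ∂θH) * f (p : G × H).1 := by
    apply tsum_eq_sum
    intro p hp
    rw [hPF, Set.Finite.mem_toFinset] at hp
    by_cases h1' : (p : G × H).1 ∈ tsupport f
    · have h2' : (p : G × H).2 ∉ Kh - Kh := fun hk => hp ⟨h1', hk⟩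
      have hint0 : ∀ y, h y * (starRingEnd ℂ) (h (y - (p : G × H).2)) = 0 := by
        intro y
        by_cases hy1 : h y = 0
        · rw [hy1]; ring
        · by_cases hy2 : h (y - (p : G × H).2) = 0
          · rw [hy2]; simp
          · exfalso
            apply h2'
            have hk1 : y ∈ Kh := by by_contra hk; exact hy1 (hKh0 _ hk)
            have hk2 : y - (p : G × H).2 ∈ Kh := by by_contra hk; exact hy2 (hKh0 _ hk)
            have := Set.sub_mem_sub hk1 hk2
            simpa using this
      have : (∫ y, h y * (starRingEnd ℂ) (h (y - (p : G × H).2)) ∂θH) = 0 := by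
        rw [show (fun y => h y * (starRingEnd ℂ) (h (y - (p : G × H).2)))
          = fun _ => (0 : ℂ) from funext hint0]
        simp
      rw [this, zero_mul]
    · rw [image_eq_zero_of_notMem_tsupport h1', mul_zero]
  -- Step 3 : the per-p convergence
  have main : ∀ p ∈ PF, Tendsto (fun n => ((θG (A n)).toReal)⁻¹ • Wfun n p) atTop
      (nhds (c • ∫ y, gfun p y ∂θH)) := by
    intro p _
    -- the density formula at t = 0
    have hgriem : RiemannIntegrable θH (gfun p) :=
      RiemannIntegrable.mul_conj_translate hh ((p : G × H).2)
    set Dfun : ℕ → ℂ := fun n =>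
      ∑' q : L, (A n).indicator (fun _ => gfun p (q : G × H).2) (q : G × H).1 with hDfun
    have htendD : Tendsto (fun n => ((θG (A n)).toReal)⁻¹ • Dfun n) atTop
        (nhds (c • ∫ y, gfun p y ∂θH)) := by
      have := (hDF (gfun p) hgriem A ⟨hAcomp, hApos, hAfin, hAvh⟩).tendsto_at (0 : G)
      simpa only [zero_vadd] using this
    -- error control
    set Kp : Set G := CG ∪ ((p : G × H).1 +ᵥ CG) with hKp
    have hKpc : IsCompact Kp := by
      refine hCGc.union ?_
      rw [← Set.image_vadd]
      exact hCGc.image (continuous_const_vadd _)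
    -- finite-sum representations
    have hWsum : ∀ n, Wfun n p = ∑ q ∈ (hEfin n).toFinset,
        ind n q * (starRingEnd ℂ) (ind n (q - p)) := by
      intro n
      apply tsum_eq_sum
      intro q hq
      have : ind n q = 0 := by
        by_contra h0
        exact hq ((hEfin n).mem_toFinset.2 (hind0 n q h0))
      rw [this]; ring
    have hDsum : ∀ n, Dfun n = ∑ q ∈ (hEfin n).toFinset,
        (A n).indicator (fun _ => gfun p (q : G × H).2) (q : G × H).1 := by
      intro n
      apply tsum_eq_sum
      intro q hq
      by_cases hmem : (q : G × H).1 ∈ A n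
      · rw [Set.indicator_of_mem hmem]
        by_cases hk : (q : G × H).2 ∈ Kh
        · exact absurd ((hEfin n).mem_toFinset.2 ⟨hmem, hk⟩) hq
        · rw [hgfun]; simp only; rw [hKh0 _ hk]; ring
      · rw [Set.indicator_of_notMem hmem]
    -- pointwise difference analysis
    have hdiff0 : ∀ n (q : L), (q : G × H).1 ∉ (A n \ ((p : G × H).1 +ᵥ A n)) →
        ind n q * (starRingEnd ℂ) (ind n (q - p)) -
          (A n).indicator (fun _ => gfun p (q : G × H).2) (q : G × H).1 = 0 := by
      intro n q hq
      by_cases hmem : (q : G × H).1 ∈ A n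
      · have hmem2 : (q : G × H).1 ∈ (p : G × H).1 +ᵥ A n := by
          by_contra hcon
          exact hq ⟨hmem, hcon⟩
        have hmem3 : ((q - p : L) : G × H).1 ∈ A n := by
          have := Set.mem_vadd_set_iff_neg_vadd_mem.1 hmem2
          have heq : -(p : G × H).1 +ᵥ (q : G × H).1 = ((q - p : L) : G × H).1 := by
            show -(p : G × H).1 + (q : G × H).1 = ((q - p : L) : G × H).1
            have : ((q - p : L) : G × H).1 = (q : G × H).1 - (p : G × H).1 := rfl
            rw [this]; abel
          rwa [heq] at this
        rw [hind]
        simp only [Set.indicator_of_mem hmem, Set.indicator_of_mem hmem3]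
        rw [hgfun]
        simp only
        have : ((q - p : L) : G × H).2 = (q : G × H).2 - (p : G × H).2 := rfl
        rw [this]
        ring
      · rw [hind]
        simp only [Set.indicator_of_notMem hmem]
        ring
    have hdiffbd : ∀ n (q : L), ‖ind n q * (starRingEnd ℂ) (ind n (q - p)) -
        (A n).indicator (fun _ => gfun p (q : G × H).2) (q : G × H).1‖ ≤ M * M := by
      intro n q
      have hb1 : ‖ind n q‖ ≤ M := by
        rw [hind]; simp only
        by_cases hmem : (q : G × H).1 ∈ A n
        · rw [Set.indicator_of_mem hmem]; exact hM _
        · rw [Set.indicator_of_notMem hmem]; simp; positivity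
      have hb2 : ‖ind n (q - p)‖ ≤ M := by
        rw [hind]; simp only
        by_cases hmem : ((q - p : L) : G × H).1 ∈ A n
        · rw [Set.indicator_of_mem hmem]; exact hM _
        · rw [Set.indicator_of_notMem hmem]; simp; positivity
      have hb3 : ‖(A n).indicator (fun _ => gfun p (q : G × H).2) (q : G × H).1‖ ≤ M * M := by
        by_cases hmem : (q : G × H).1 ∈ A n
        · rw [Set.indicator_of_mem hmem, hgfun]
          simp only
          rw [norm_mul, RCLike.norm_conj]
          exact mul_le_mul (hM _) (hM _) (norm_nonneg _) (le_of_lt hM0)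
        · rw [Set.indicator_of_notMem hmem]; simp; positivity
      by_cases hq : (q : G × H).1 ∈ (A n \ ((p : G × H).1 +ᵥ A n))
      · -- here ind n (q - p) = 0
        have hmem3 : ((q - p : L) : G × H).1 ∉ A n := by
          intro hcon
          apply hq.2
          rw [Set.mem_vadd_set_iff_neg_vadd_mem]
          show -(p : G × H).1 + (q : G × H).1 ∈ A n
          have heq : -(p : G × H).1 + (q : G × H).1 = ((q - p : L) : G × H).1 := by
            have : ((q - p : L) : G × H).1 = (q : G × H).1 - (p : G × H).1 := rfl
            rw [this]; abel
          rwa [heq]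
        have : ind n (q - p) = 0 := by
          rw [hind]; simp only [Set.indicator_of_notMem hmem3]
        rw [this]
        simp only [map_zero, mul_zero, zero_sub, norm_neg]
        exact hb3
      · rw [hdiff0 n q hq]; simp; positivity
    -- the error tends to zero
    have herr : Tendsto (fun n => ((θG (A n)).toReal)⁻¹ • (Wfun n p - Dfun n)) atTop
        (nhds 0) := by
      -- measure-theoretic constants
      have hvG0 : θG VG ≠ 0 := (hVGo.measure_pos θG ⟨0, h0G⟩).ne'
      have hvGt : θG VG ≠ ⊤ := ((measure_mono hVCG).trans_lt hCGc.measure_lt_top).ne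
      have hvH0 : θH VH ≠ 0 := (hVHo.measure_pos θH ⟨0, h0H⟩).ne'
      have hvHt : θH VH ≠ ⊤ := ((measure_mono hVCH).trans_lt hCHc.measure_lt_top).ne
      have hκt : θH (Kh + VH) ≠ ⊤ :=
        ((measure_mono (Set.add_subset_add_left hVCH)).trans_lt
          (hKhc.add hCHc).measure_lt_top).ne
      have hent : ∀ n, θG (vhBoundary Kp (A n)) ≠ ⊤ := by
        intro n
        refine ((measure_mono (vhBoundary_subset_compact Kp (A n))).trans_lt ?_).ne
        exact ((hKpc.add (hAcomp n).closure).union (hAcomp n).closure).measure_lt_top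
      set D : ℝ := (θG VG).toReal * (θH VH).toReal with hD
      have hDpos : 0 < D := mul_pos (ENNReal.toReal_pos hvG0 hvGt)
        (ENNReal.toReal_pos hvH0 hvHt)
      set κ : ℝ := (θH (Kh + VH)).toReal with hκ
      have hκ0 : 0 ≤ κ := ENNReal.toReal_nonneg
      -- per n bound
      have hbound : ∀ n, ‖((θG (A n)).toReal)⁻¹ • (Wfun n p - Dfun n)‖ ≤
          (M * M * κ / D) * ((θG (vhBoundary Kp (A n)) / θG (A n)).toReal) := by
        intro n
        set Fn := (hEfin n).toFinset with hFn
        set Bn := Fn.filter (fun q : L => (q : G × H).1 ∈ (A n \ ((p : G × H).1 +ᵥ A n)))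
          with hBn
        have hsum1 : Wfun n p - Dfun n = ∑ q ∈ Fn,
            (ind n q * (starRingEnd ℂ) (ind n (q - p)) -
              (A n).indicator (fun _ => gfun p (q : G × H).2) (q : G × H).1) := by
          rw [hWsum n, hDsum n, Finset.sum_sub_distrib]
        have hnorm1 : ‖Wfun n p - Dfun n‖ ≤ (Bn.card : ℝ) * (M * M) := by
          rw [hsum1]
          refine (norm_sum_le _ _).trans ?_
          have hzero : ∀ q ∈ Fn, q ∉ Bn →
              ‖ind n q * (starRingEnd ℂ) (ind n (q - p)) -
                (A n).indicator (fun _ => gfun p (q : G × H).2) (q : G × H).1‖ = 0 := by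
            intro q hq hqb
            have : (q : G × H).1 ∉ (A n \ ((p : G × H).1 +ᵥ A n)) := by
              intro hcon
              exact hqb (Finset.mem_filter.2 ⟨hq, hcon⟩)
            rw [hdiff0 n q this, norm_zero]
          calc ∑ q ∈ Fn, ‖ind n q * (starRingEnd ℂ) (ind n (q - p)) -
                (A n).indicator (fun _ => gfun p (q : G × H).2) (q : G × H).1‖
              = ∑ q ∈ Bn, ‖ind n q * (starRingEnd ℂ) (ind n (q - p)) -
                (A n).indicator (fun _ => gfun p (q : G × H).2) (q : G × H).1‖ := by
                refine (Finset.sum_subset (Finset.filter_subset _ _) ?_).symm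
                intro q hq hqb
                exact hzero q hq hqb
            _ ≤ ∑ _q ∈ Bn, (M * M) := Finset.sum_le_sum (fun q _ => hdiffbd n q)
            _ = (Bn.card : ℝ) * (M * M) := by rw [Finset.sum_const, nsmul_eq_mul]
        -- packing bound on the cardinality
        have hpack := packing_bound θG θH L hVGo hVHo hsep Bn
          (S := A n \ ((p : G × H).1 +ᵥ A n)) (T := Kh) (fun q hq => by
            rw [hBn, Finset.mem_filter] at hq
            exact ⟨hq.2, ((hEfin n).mem_toFinset.1 hq.1).2⟩)
        have hSV : θG ((A n \ ((p : G × H).1 +ᵥ A n)) + VG) ≤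
            θG (vhBoundary Kp (A n)) :=
          measure_mono (diff_vadd_add_subset_vhBoundary hVCG ((p : G × H).1) (A n))
        have hpack2 : (Bn.card : ℝ≥0∞) * (θG VG * θH VH) ≤
            θG (vhBoundary Kp (A n)) * θH (Kh + VH) :=
          hpack.trans (mul_le_mul' hSV le_rfl)
        have hcard : (Bn.card : ℝ) * D ≤ (θG (vhBoundary Kp (A n))).toReal * κ := by
          have hrhs : θG (vhBoundary Kp (A n)) * θH (Kh + VH) ≠ ⊤ :=
            ENNReal.mul_ne_top (hent n) hκt
          have := ENNReal.toReal_mono hrhs hpack2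
          rw [ENNReal.toReal_mul, ENNReal.toReal_mul, ENNReal.toReal_mul,
            ENNReal.toReal_natCast] at this
          rw [hD, hκ]
          calc (Bn.card : ℝ) * ((θG VG).toReal * (θH VH).toReal)
              ≤ (θG (vhBoundary Kp (A n))).toReal * (θH (Kh + VH)).toReal := this
            _ = _ := rfl
        -- put it together
        have hcn0 : (0:ℝ) ≤ ((θG (A n)).toReal)⁻¹ := by positivity
        have hbn : 0 < (θG (A n)).toReal :=
          ENNReal.toReal_pos (hApos n).ne' (hAfin n).ne
        rw [norm_smul, Real.norm_eq_abs, abs_of_nonneg hcn0]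
        have step1 : ((θG (A n)).toReal)⁻¹ * ‖Wfun n p - Dfun n‖ ≤
            ((θG (A n)).toReal)⁻¹ * ((Bn.card : ℝ) * (M * M)) :=
          mul_le_mul_of_nonneg_left hnorm1 hcn0
        have hcard2 : (Bn.card : ℝ) ≤ (θG (vhBoundary Kp (A n))).toReal * κ / D :=
          (le_div_iff₀ hDpos).2 hcard
        have step2 : ((θG (A n)).toReal)⁻¹ * ((Bn.card : ℝ) * (M * M)) ≤
            ((θG (A n)).toReal)⁻¹ *
              (((θG (vhBoundary Kp (A n))).toReal * κ / D) * (M * M)) := by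
          apply mul_le_mul_of_nonneg_left _ hcn0
          apply mul_le_mul_of_nonneg_right hcard2 (by positivity)
        refine (step1.trans step2).trans (le_of_eq ?_)
        rw [ENNReal.toReal_div]
        ring
      -- the majorant tends to zero
      have hvh := hAvh Kp hKpc
      have hvhr : Tendsto (fun n => ((θG (vhBoundary Kp (A n)) / θG (A n)).toReal))
          atTop (nhds 0) := by
        have hcont := ENNReal.tendsto_toReal (a := 0) (by simp)
        have := hcont.comp hvh
        simpa [Function.comp_def] using this
      rw [tendsto_zero_iff_norm_tendsto_zero]
      refine squeeze_zero (fun n => norm_nonneg _) hbound ?_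
      have := hvhr.const_mul (M * M * κ / D)
      simpa using this
    -- combine
    have hcomb := htendD.add herr
    rw [add_zero] at hcomb
    have : (fun n => ((θG (A n)).toReal)⁻¹ • Dfun n +
        ((θG (A n)).toReal)⁻¹ • (Wfun n p - Dfun n)) =
        fun n => ((θG (A n)).toReal)⁻¹ • Wfun n p := by
      funext n
      rw [← smul_add, add_sub_cancel]
    rwa [this] at hcomb
  -- Step 4 : conclude
  have hfinal : Tendsto (fun n => ∑ p ∈ PF, f (p : G × H).1 *
      (((θG (A n)).toReal)⁻¹ • Wfun n p)) atTop
      (nhds (∑ p ∈ PF, f (p : G × H).1 * (c • ∫ y, gfun p y ∂θH))) :=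
    tendsto_finset_sum _ (fun p hp => (main p hp).const_mul _)
  have hLHS : (fun n => ((θG (A n)).toReal)⁻¹ •
      ∑' q : L, ∑' r : L,
        (A n).indicator (fun _ => h (q : G × H).2) (q : G × H).1 *
          (starRingEnd ℂ) ((A n).indicator (fun _ => h (r : G × H).2) (r : G × H).1) *
            f ((q : G × H).1 - (r : G × H).1)) =
      fun n => ∑ p ∈ PF, f (p : G × H).1 * (((θG (A n)).toReal)⁻¹ • Wfun n p) := by
    funext n
    rw [claim1 n, Finset.smul_sum]
    exact Finset.sum_congr rfl (fun p _ => (mul_smul_comm _ _ _).symm)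
  have hRHS : (c • ∑' q : L, (∫ y, h y * (starRingEnd ℂ) (h (y - (q : G × H).2)) ∂θH) *
      f (q : G × H).1) = ∑ p ∈ PF, f (p : G × H).1 * (c • ∫ y, gfun p y ∂θH) := by
    rw [claim2, Finset.smul_sum]
    exact Finset.sum_congr rfl (fun p _ => by
      rw [mul_comm ((∫ y, gfun p y ∂θH)) (f (p : G × H).1)]
      exact (mul_smul_comm _ _ _).symm)
  rw [hLHS, hRHS]
  exact hfinal
end

section
/- Let (G,H,ℒ) be a cut-and-project scheme with G σ-compact, and let h ∈ C_0(H) be such that ω_h = ∑_{(x,y)∈ℒ} h(y) δ_x is a translation bounded measure on G. Then h ∈ L¹(H). -/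
open MeasureTheory Filter Topology
open scoped ENNReal Pointwise

/-- A discrete subgroup meets every compact set in a finite set
(no Hausdorff assumption needed). -/
lemma aux_discrete_finite {X : Type*} [AddCommGroup X] [TopologicalSpace X]
    [IsTopologicalAddGroup X] (L : AddSubgroup X) [DiscreteTopology L] {S : Set X}
    (hS : IsCompact S) : ((L : Set X) ∩ S).Finite := by
  classical
  have h0 : IsOpen ({0} : Set L) := isOpen_discrete _
  rw [isOpen_induced_iff] at h0
  obtain ⟨U₀, hU₀o, hU₀⟩ := h0
  have hU₀mem : (0 : X) ∈ U₀ := by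
    have : (0 : L) ∈ (Subtype.val ⁻¹' U₀ : Set L) := by rw [hU₀]; rfl
    exact this
  have hisolate : ∀ x : X, x ∈ (L : Set X) → x ∈ U₀ → x = 0 := by
    intro x hxL hxU
    have : (⟨x, hxL⟩ : L) ∈ (Subtype.val ⁻¹' U₀ : Set L) := hxU
    rw [hU₀] at this
    simpa using congrArg Subtype.val this
  have hsub : Continuous fun p : X × X => p.1 - p.2 := continuous_sub
  have hpre : (fun p : X × X => p.1 - p.2) ⁻¹' U₀ ∈ 𝓝 ((0 : X), (0 : X)) := by
    apply hsub.continuousAt.preimage_mem_nhds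
    simpa using hU₀o.mem_nhds hU₀mem
  rw [nhds_prod_eq, Filter.mem_prod_iff] at hpre
  obtain ⟨V₁, hV₁, V₂, hV₂, hV⟩ := hpre
  set V : Set X := V₁ ∩ V₂ with hVdef
  have hVmem : V ∈ 𝓝 (0 : X) := Filter.inter_mem hV₁ hV₂
  have hVV : ∀ a ∈ V, ∀ b ∈ V, a - b ∈ U₀ := fun a ha b hb =>
    hV (Set.mk_mem_prod ha.1 hb.2)
  obtain ⟨t, -, hcov⟩ := hS.elim_nhds_subcover (fun x => {y : X | y - x ∈ V}) (by
    intro x _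
    have hcont : Continuous fun y : X => y - x := continuous_id.sub continuous_const
    apply hcont.continuousAt.preimage_mem_nhds
    simpa using hVmem)
  have hsub1 : ((L : Set X) ∩ S) ⊆ ⋃ x ∈ t, ((L : Set X) ∩ {y : X | y - x ∈ V}) := by
    rintro a ⟨haL, haS⟩
    obtain ⟨x, hxt, hx⟩ := Set.mem_iUnion₂.mp (hcov haS)
    exact Set.mem_iUnion₂.mpr ⟨x, hxt, haL, hx⟩
  refine Set.Finite.subset (Set.Finite.biUnion t.finite_toSet (fun x _ => ?_)) hsub1
  apply Set.Subsingleton.finite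
  rintro a ⟨haL, haV⟩ b ⟨hbL, hbV⟩
  have : a - b ∈ U₀ := by
    have := hVV _ haV _ hbV
    simpa using this
  exact sub_eq_zero.mp (hisolate _ (sub_mem haL hbL) this)

/-- A cocompact subgroup admits a compact set of representatives. -/
lemma aux_cocompact {X : Type*} [AddCommGroup X] [TopologicalSpace X]
    [IsTopologicalAddGroup X] [LocallyCompactSpace X] (L : AddSubgroup X)
    [CompactSpace (X ⧸ L)] : ∃ K : Set X, IsCompact K ∧ ∀ z : X, ∃ c ∈ K, z - c ∈ L := by
  classical
  have hmk : IsOpenMap (QuotientAddGroup.mk : X → X ⧸ L) := QuotientAddGroup.isOpenMap_coe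
  choose Kf hKfc hKfn using fun x : X => exists_compact_mem_nhds x
  have hcov : (Set.univ : Set (X ⧸ L)) ⊆
      ⋃ x : X, (QuotientAddGroup.mk '' interior (Kf x)) := by
    rintro q -
    obtain ⟨x, rfl⟩ := QuotientAddGroup.mk_surjective q
    exact Set.mem_iUnion.mpr ⟨x, Set.mem_image_of_mem _ (mem_interior_iff_mem_nhds.mpr (hKfn x))⟩
  obtain ⟨t, ht⟩ := isCompact_univ.elim_finite_subcover
    (fun x : X => QuotientAddGroup.mk '' interior (Kf x))
    (fun x => hmk _ isOpen_interior) hcov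
  refine ⟨⋃ x ∈ t, Kf x, t.finite_toSet.isCompact_biUnion (fun x _ => hKfc x), ?_⟩
  intro z
  obtain ⟨x, hxt, c, hc, hcz⟩ := Set.mem_iUnion₂.mp (ht (Set.mem_univ (QuotientAddGroup.mk z)))
  refine ⟨c, Set.mem_biUnion hxt (interior_subset hc), ?_⟩
  have : -c + z ∈ L := (QuotientAddGroup.eq).mp hcz
  simpa [sub_eq_neg_add] using this

/-- In a cut-and-project scheme `(G, H, ℒ)` with `G` σ-compact, if
`h ∈ C₀(H)` is such that `ω_h = ∑_{(x,y) ∈ ℒ} h(y) δ_x` is a translation bounded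
measure on `G`, then `h ∈ L¹(H)`. -/
theorem c0_weight_translationBounded_integrable
    {G H : Type*}
    [AddCommGroup G] [TopologicalSpace G] [IsTopologicalAddGroup G] [LocallyCompactSpace G]
    [SigmaCompactSpace G] [MeasurableSpace G] [BorelSpace G]
    [AddCommGroup H] [TopologicalSpace H] [IsTopologicalAddGroup H] [LocallyCompactSpace H]
    [MeasurableSpace H] [BorelSpace H]
    (θH : Measure H) [θH.IsAddHaarMeasure]
    (L : AddSubgroup (G × H)) [DiscreteTopology L] [CompactSpace ((G × H) ⧸ L)]
    (hinj : Set.InjOn Prod.fst (L : Set (G × H)))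
    (hdense : Dense (Prod.snd '' (L : Set (G × H))))
    (h : H → ℂ) (hc : Continuous h) (h0 : Tendsto h (cocompact H) (nhds 0))
    -- `ω_h` is translation bounded (via its total variation `|ω_h|`):
    (hTB : ∀ K : Set G, IsCompact K → ∃ C : ℝ≥0∞, C < ⊤ ∧ ∀ s : G,
      (Measure.sum fun q : L =>
        (‖h ((q : G × H).2)‖₊ : ℝ≥0∞) • Measure.dirac (q : G × H).1) (s +ᵥ K) ≤ C) :
    Integrable h θH := by
  classical
  -- a symmetric open neighborhood `V` of `0` in `H` inside a compact set `N`
  obtain ⟨N, hNc, hNn⟩ := exists_compact_mem_nhds (0 : H)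
  set V : Set H := interior N ∩ (-interior N) with hVdef
  have hVo : IsOpen V := isOpen_interior.inter isOpen_interior.neg
  have hV0 : (0 : H) ∈ V :=
    ⟨mem_interior_iff_mem_nhds.mpr hNn, by simpa using mem_interior_iff_mem_nhds.mpr hNn⟩
  have hVsym : ∀ y ∈ V, -y ∈ V := by
    rintro y ⟨h1, h2⟩
    exact ⟨by simpa using h2, by simpa using h1⟩
  have hVN : V ⊆ N := fun y hy => interior_subset hy.1
  -- Step E: relative denseness of the lattice over a compact window `W ⊆ G`
  obtain ⟨K₀, hK₀c, hK₀⟩ := aux_cocompact L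
  have stepE : ∃ W : Set G, IsCompact W ∧ ∀ y : H, ∃ ℓ : L,
      (ℓ : G × H).1 ∈ W ∧ (ℓ : G × H).2 - y ∈ V := by
    set P : Set H := Prod.snd '' K₀ with hPdef
    have hPc : IsCompact P := hK₀c.image continuous_snd
    have hcov : P ⊆ ⋃ ℓ : L, {p : H | p - (ℓ : G × H).2 ∈ V} := by
      intro p _
      have hO : IsOpen ((fun v => p + v) '' V) := (Homeomorph.addLeft p).isOpenMap _ hVo
      have hOne : ((fun v => p + v) '' V).Nonempty := ⟨p + 0, Set.mem_image_of_mem _ hV0⟩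
      obtain ⟨y, hyL, hyO⟩ := hdense.exists_mem_open hO hOne
      obtain ⟨z, hzL, rfl⟩ := hyL
      obtain ⟨v, hv, hveq⟩ := hyO
      refine Set.mem_iUnion.mpr ⟨⟨z, hzL⟩, ?_⟩
      have : p - z.2 = -v := by
        have : z.2 = p + v := hveq.symm
        rw [this]; abel
      rw [Set.mem_setOf_eq, this]
      exact hVsym v hv
    obtain ⟨t, ht⟩ := hPc.elim_finite_subcover
      (fun ℓ : L => {p : H | p - (ℓ : G × H).2 ∈ V})
      (fun ℓ => (hVo.preimage (continuous_id.sub continuous_const))) hcov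
    refine ⟨⋃ ℓ ∈ t, (fun c => (ℓ : G × H).1 - c) '' (Prod.fst '' K₀),
      t.finite_toSet.isCompact_biUnion
        (fun ℓ _ => ((hK₀c.image continuous_fst).image (continuous_const.sub continuous_id))), ?_⟩
    intro y
    obtain ⟨c, hcK, hcL⟩ := hK₀ ((0 : G), y)
    set ℓ₀ : L := ⟨((0 : G), y) - c, hcL⟩ with hℓ₀def
    obtain ⟨i, hit, hi⟩ := Set.mem_iUnion₂.mp (ht (Set.mem_image_of_mem Prod.snd hcK))
    refine ⟨ℓ₀ + i, ?_, ?_⟩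
    · refine Set.mem_biUnion hit ?_
      refine ⟨c.1, Set.mem_image_of_mem Prod.fst hcK, ?_⟩
      show (i : G × H).1 - c.1 = ((ℓ₀ + i : L) : G × H).1
      have : ((ℓ₀ + i : L) : G × H).1 = (0 - c.1) + (i : G × H).1 := rfl
      rw [this]; abel
    · have h2 : ((ℓ₀ + i : L) : G × H).2 = (y - c.2) + (i : G × H).2 := rfl
      have : ((ℓ₀ + i : L) : G × H).2 - y = (i : G × H).2 - c.2 := by rw [h2]; abel
      rw [this]
      have := hVsym _ hi
      simpa using this
  obtain ⟨W, hWc, hW⟩ := stepE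
  -- a continuous plateau function over `W`
  obtain ⟨φ, hφ1, -, hφsupp, hφ01⟩ :=
    exists_continuous_one_zero_of_isCompact hWc isClosed_empty (Set.disjoint_empty W)
  have hSφc : IsCompact (tsupport ⇑φ) := hφsupp
  have hSφcl : IsClosed (tsupport ⇑φ) := isClosed_closure
  obtain ⟨C, hC, hCb⟩ := hTB (tsupport ⇑φ) hSφc
  -- strip bound, real version
  have strip : ∀ (s : G) (F : Finset L),
      (∑ q ∈ F, if (q : G × H).1 ∈ s +ᵥ (tsupport ⇑φ) then ‖h (q : G × H).2‖ else 0)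
        ≤ C.toReal := by
    intro s F
    have hA : MeasurableSet (s +ᵥ (tsupport ⇑φ)) := (hSφcl.vadd s).measurableSet
    have hkey : (∑ q ∈ F,
        if (q : G × H).1 ∈ s +ᵥ (tsupport ⇑φ) then (‖h (q : G × H).2‖₊ : ℝ≥0∞) else 0)
        ≤ C := by
      refine le_trans ?_ (hCb s)
      rw [Measure.sum_apply _ hA]
      refine le_trans (le_of_eq ?_) (ENNReal.sum_le_tsum F)
      refine Finset.sum_congr rfl (fun q _ => ?_)
      rw [Measure.smul_apply, smul_eq_mul, Measure.dirac_apply' _ hA]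
      by_cases hq : (q : G × H).1 ∈ s +ᵥ (tsupport ⇑φ) <;>
        simp [Set.indicator_apply, hq]
    have hne : ∀ q ∈ F,
        (if (q : G × H).1 ∈ s +ᵥ (tsupport ⇑φ) then (‖h (q : G × H).2‖₊ : ℝ≥0∞) else 0) ≠ ⊤ := by
      intro q _; split <;> simp
    calc (∑ q ∈ F, if (q : G × H).1 ∈ s +ᵥ (tsupport ⇑φ) then ‖h (q : G × H).2‖ else 0)
        = (∑ q ∈ F, if (q : G × H).1 ∈ s +ᵥ (tsupport ⇑φ)
            then (‖h (q : G × H).2‖₊ : ℝ≥0∞) else 0).toReal := by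
          rw [ENNReal.toReal_sum hne]
          refine Finset.sum_congr rfl (fun q _ => ?_)
          split <;> simp
      _ ≤ C.toReal := ENNReal.toReal_mono hC.ne hkey
  -- periodization bound via density of the projection of the lattice to `H`
  have stepD : ∀ (F : Finset L) (x : G) (y : H),
      (∑ q ∈ F, φ (x + (q : G × H).1) * ‖h (y + (q : G × H).2)‖) ≤ C.toReal := by
    intro F
    set g : G × H → ℝ := fun z => ∑ q ∈ F, φ (z.1 + (q : G × H).1) * ‖h (z.2 + (q : G × H).2)‖
      with hgdef
    have hgc : Continuous g := by
      apply continuous_finset_sum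
      intro q _
      exact ((φ.continuous.comp (continuous_fst.add continuous_const)).mul
        ((hc.comp (continuous_snd.add continuous_const)).norm))
    have hdense2 : Dense ((Set.univ : Set G) ×ˢ (Prod.snd '' (L : Set (G × H)))) :=
      dense_univ.prod hdense
    have hbound : ∀ z ∈ (Set.univ : Set G) ×ˢ (Prod.snd '' (L : Set (G × H))),
        g z ≤ C.toReal := by
      rintro ⟨x, y⟩ ⟨-, ⟨ℓ₀v, hℓ₀L, rfl⟩⟩
      set ℓ₀ : L := ⟨ℓ₀v, hℓ₀L⟩ with hℓ₀def
      have hinj2 : Function.Injective (fun q : L => q + ℓ₀) := add_left_injective ℓ₀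
      have hre : g (x, ℓ₀v.2) = ∑ q' ∈ F.image (fun q : L => q + ℓ₀),
          φ ((x - ℓ₀v.1) + (q' : G × H).1) * ‖h (q' : G × H).2‖ := by
        rw [Finset.sum_image (fun a _ b _ hab => hinj2 hab)]
        refine Finset.sum_congr rfl (fun q _ => ?_)
        have h1 : ((q + ℓ₀ : L) : G × H).1 = (q : G × H).1 + ℓ₀v.1 := rfl
        have h2 : ((q + ℓ₀ : L) : G × H).2 = (q : G × H).2 + ℓ₀v.2 := rfl
        rw [h1, h2]
        congr 2
        · abel
        · rw [add_comm]
      rw [hre]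
      refine le_trans (Finset.sum_le_sum (fun q' _ => ?_)) (strip (ℓ₀v.1 - x) _)
      by_cases hq : (x - ℓ₀v.1) + (q' : G × H).1 ∈ tsupport ⇑φ
      · have hmem : (q' : G × H).1 ∈ (ℓ₀v.1 - x) +ᵥ (tsupport ⇑φ) := by
          rw [Set.mem_vadd_set_iff_neg_vadd_mem]
          show -(ℓ₀v.1 - x) + (q' : G × H).1 ∈ tsupport ⇑φ
          rwa [neg_sub]
        rw [if_pos hmem]
        calc φ ((x - ℓ₀v.1) + (q' : G × H).1) * ‖h (q' : G × H).2‖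
            ≤ 1 * ‖h (q' : G × H).2‖ := by
              apply mul_le_mul_of_nonneg_right (hφ01 _).2 (norm_nonneg _)
          _ = ‖h (q' : G × H).2‖ := one_mul _
      · rw [image_eq_zero_of_notMem_tsupport hq, zero_mul]
        split <;> simp [norm_nonneg]
    intro x y
    have : (Set.univ : Set (G × H)) ⊆ {z | g z ≤ C.toReal} := by
      rw [← hdense2.closure_eq]
      exact closure_minimal hbound (isClosed_le hgc continuous_const)
    exact this (Set.mem_univ (x, y))
  -- uniform bound over compact subsets of `H`
  have key : ∀ K : Set H, IsCompact K → ∫⁻ y in K, (‖h y‖₊ : ℝ≥0∞) ∂θH ≤ C * θH N := by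
    intro K hK
    set T : Set L := {ℓ : L | (ℓ : G × H).1 ∈ W ∧ (ℓ : G × H).2 ∈ K + V} with hTdef
    have hTfin : T.Finite := by
      have hfin := aux_discrete_finite L (hWc.prod (hK.add hNc))
      refine Set.Finite.subset (hfin.preimage (Set.injOn_of_injective Subtype.coe_injective))
        ?_
      rintro ℓ ⟨h1, h2⟩
      refine ⟨ℓ.2, ?_⟩
      exact Set.mk_mem_prod h1 (Set.add_subset_add_left hVN h2)
    set F : Finset L := hTfin.toFinset with hFdef
    have hcov : K ⊆ ⋃ ℓ ∈ F, ((ℓ : G × H).2 +ᵥ V) := by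
      intro y hy
      obtain ⟨ℓ, hℓW, hℓV⟩ := hW y
      have hℓT : ℓ ∈ F := by
        rw [hFdef, Set.Finite.mem_toFinset]
        refine ⟨hℓW, ?_⟩
        have : (ℓ : G × H).2 = y + ((ℓ : G × H).2 - y) := by abel
        rw [this]
        exact Set.add_mem_add hy hℓV
      refine Set.mem_biUnion hℓT ?_
      rw [Set.mem_vadd_set_iff_neg_vadd_mem]
      show -(ℓ : G × H).2 + y ∈ V
      have : -(ℓ : G × H).2 + y = -((ℓ : G × H).2 - y) := by abel
      rw [this]
      exact hVsym _ hℓV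
    have hVmeas : MeasurableSet V := hVo.measurableSet
    have hmeas : ∀ ℓ : L, Measurable fun u : H => (‖h ((ℓ : G × H).2 + u)‖₊ : ℝ≥0∞) :=
      fun ℓ => ((hc.comp (continuous_const.add continuous_id)).nnnorm.measurable).coe_nnreal_ennreal
    calc ∫⁻ y in K, (‖h y‖₊ : ℝ≥0∞) ∂θH
        ≤ ∫⁻ y in ⋃ ℓ ∈ F, ((ℓ : G × H).2 +ᵥ V), (‖h y‖₊ : ℝ≥0∞) ∂θH :=
          lintegral_mono_set hcov
      _ ≤ ∑ ℓ ∈ F, ∫⁻ y in ((ℓ : G × H).2 +ᵥ V), (‖h y‖₊ : ℝ≥0∞) ∂θH := by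
          have huni : (⋃ ℓ ∈ F, ((ℓ : G × H).2 +ᵥ V)) =
              ⋃ i : {x // x ∈ F}, (((i : L) : G × H).2 +ᵥ V) := by
            ext y; simp
          rw [huni]
          refine le_trans (lintegral_iUnion_le _ _) ?_
          rw [← Finset.tsum_subtype]
      _ = ∑ ℓ ∈ F, ∫⁻ u in V, (‖h ((ℓ : G × H).2 + u)‖₊ : ℝ≥0∞) ∂θH := by
          refine Finset.sum_congr rfl (fun ℓ _ => ?_)
          have hmp : MeasurePreserving (fun u : H => (ℓ : G × H).2 +ᵥ u) θH θH :=
            measurePreserving_vadd _ θH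
          have := hmp.setLIntegral_comp_emb (measurableEmbedding_const_vadd _)
            (fun y => (‖h y‖₊ : ℝ≥0∞)) V
          rw [Set.image_vadd] at this
          exact this.symm
      _ = ∫⁻ u in V, ∑ ℓ ∈ F, (‖h ((ℓ : G × H).2 + u)‖₊ : ℝ≥0∞) ∂θH :=
          (lintegral_finset_sum' F (fun ℓ _ => (hmeas ℓ).aemeasurable)).symm
      _ ≤ ∫⁻ _ in V, C ∂θH := by
          refine setLIntegral_mono measurable_const (fun u _ => ?_)
          have hreal : (∑ ℓ ∈ F, ‖h (u + (ℓ : G × H).2)‖) ≤ C.toReal := by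
            have := stepD F 0 u
            refine le_trans (le_of_eq ?_) this
            refine Finset.sum_congr rfl (fun ℓ hℓ => ?_)
            have hℓW : (ℓ : G × H).1 ∈ W := by
              rw [hFdef, Set.Finite.mem_toFinset] at hℓ
              exact hℓ.1
            rw [zero_add, hφ1 hℓW, Pi.one_apply, one_mul]
          calc (∑ ℓ ∈ F, (‖h ((ℓ : G × H).2 + u)‖₊ : ℝ≥0∞))
              = ENNReal.ofReal (∑ ℓ ∈ F, ‖h (u + (ℓ : G × H).2)‖) := by
                rw [ENNReal.ofReal_sum_of_nonneg (fun ℓ _ => norm_nonneg _)]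
                refine Finset.sum_congr rfl (fun ℓ _ => ?_)
                rw [add_comm]; exact (ofReal_norm _).symm
            _ ≤ ENNReal.ofReal C.toReal := ENNReal.ofReal_le_ofReal hreal
            _ ≤ C := ENNReal.ofReal_toReal_le
      _ = C * θH V := setLIntegral_const _ _
      _ ≤ C * θH N := mul_le_mul_right (measure_mono hVN) C
  -- conclude: exhaust `{h ≠ 0}` by the compact sets `{‖h‖ ≥ 1/(n+1)}`
  have hM : C * θH N < ⊤ := ENNReal.mul_lt_top hC hNc.measure_lt_top
  refine ⟨hc.aestronglyMeasurable, ?_⟩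
  show ∫⁻ y, (‖h y‖₊ : ℝ≥0∞) ∂θH < ⊤
  set S : ℕ → Set H := fun n => {y | 1 / ((n : ℝ) + 1) ≤ ‖h y‖} with hSdef
  have hScl : ∀ n, IsClosed (S n) := fun n => isClosed_le continuous_const hc.norm
  have hScomp : ∀ n, IsCompact (S n) := by
    intro n
    have hpos : (0 : ℝ) < 1 / ((n : ℝ) + 1) := by positivity
    have hb : h ⁻¹' Metric.ball 0 (1 / ((n : ℝ) + 1)) ∈ cocompact H :=
      h0 (Metric.ball_mem_nhds 0 hpos)
    obtain ⟨T, hTc, hTs⟩ := mem_cocompact.mp hb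
    refine hTc.of_isClosed_subset (hScl n) ?_
    intro y hy
    by_contra hyT
    have h1 : ‖h y‖ < 1 / ((n : ℝ) + 1) := by
      have := hTs hyT
      simpa [Real.dist_eq] using this
    have h2 : 1 / ((n : ℝ) + 1) ≤ ‖h y‖ := hy
    linarith
  set f : ℕ → H → ℝ≥0∞ := fun n => (S n).indicator (fun y => (‖h y‖₊ : ℝ≥0∞)) with hfdef
  have hfmeas : ∀ n, Measurable (f n) :=
    fun n => (hc.nnnorm.measurable.coe_nnreal_ennreal).indicator (hScl n).measurableSet
  have hmono : Monotone f := by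
    intro m n hmn
    apply Set.indicator_le_indicator_of_subset
    · intro y hy
      have hy' : 1 / ((m : ℝ) + 1) ≤ ‖h y‖ := hy
      have hle : 1 / ((n : ℝ) + 1) ≤ 1 / ((m : ℝ) + 1) := by
        apply one_div_le_one_div_of_le (by positivity)
        exact add_le_add_left (by exact_mod_cast hmn) 1
      show 1 / ((n : ℝ) + 1) ≤ ‖h y‖
      linarith
    · exact fun _ => zero_le
  have hsup : ∀ y, (⨆ n, f n y) = (‖h y‖₊ : ℝ≥0∞) := by
    intro y
    refine le_antisymm (iSup_le fun n => Set.indicator_le_self _ _ y) ?_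
    by_cases hy : h y = 0
    · simp [hy]
    · have hpos : 0 < ‖h y‖ := norm_pos_iff.mpr hy
      obtain ⟨n, hn⟩ := exists_nat_one_div_lt hpos
      have hyS : y ∈ S n := le_of_lt hn
      have : f n y = (‖h y‖₊ : ℝ≥0∞) := Set.indicator_of_mem hyS _
      rw [← this]
      exact le_iSup (fun n => f n y) n
  calc ∫⁻ y, (‖h y‖₊ : ℝ≥0∞) ∂θH = ∫⁻ y, ⨆ n, f n y ∂θH := by
        refine lintegral_congr (fun y => (hsup y).symm)
    _ = ⨆ n, ∫⁻ y, f n y ∂θH := lintegral_iSup hfmeas hmono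
    _ ≤ C * θH N := by
        refine iSup_le (fun n => ?_)
        have heq : ∫⁻ y, f n y ∂θH = ∫⁻ y in S n, (‖h y‖₊ : ℝ≥0∞) ∂θH := by
          simp only [hfdef]
          exact lintegral_indicator (hScl n).measurableSet _
        rw [heq]
        exact key (S n) (hScomp n)
    _ < ⊤ := hM
end
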